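/- arXiv:2202.05356 — 3 statements merged into one kernel-verified Lean document; each statement's English description precedes it below -/
import Mathlib

section
/- Define the long-term total effect τ_{LTE}(π₁, π₂) = (1/n)·Σ_{i=1}^n ( E_{μ(π₁)}[Y_i] − E_{μ(π₂)}[Y_i] ) and its mean-field analogue τ̃_{LTE}(π₁, π₂) = (1/n)·Σ_{i=1}^n ( P*_i(π₁) − P*_i(π₂) ), where P*(π) is the unique fixed point of the mean-field dynamical system with treatment vector π. Under the regularity assumptions, for any Δ ∈ ℝ and v ∈ ℝ^n with π + Δv ∈ (0,1)^n: | τ_{LTE}(π + Δv, π) − τ̃_{LTE}(π + Δv, π) | ≤ √(L_n)·√C/(1−C). -/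
open Finset Filter Topology

noncomputable section

namespace MRT

/-- The state space: binary outcomes for each of the `n` units. -/
abbrev State (n : ℕ) := Fin n → Bool

variable {n : ℕ}

/-- `zc Nbr y i` is `Z_i(y) = ∑_{j ∈ 𝒩_i} y_j`, the number of active neighbors of `i`. -/
def zc (Nbr : Fin n → Finset (Fin n)) (y : State n) (i : Fin n) : ℝ :=
  ∑ j ∈ Nbr i, (if y j then (1 : ℝ) else 0)

/-- Probability that coordinate `i` is `1` at the next step, starting from state `y`,
under Bernoulli(π i) treatments. -/
def succProb (Nbr : Fin n → Finset (Fin n)) (f : Fin n → Bool → Bool → ℝ → ℝ)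
    (π : Fin n → ℝ) (y : State n) (i : Fin n) : ℝ :=
  π i * f i (y i) true (zc Nbr y i) + (1 - π i) * f i (y i) false (zc Nbr y i)

/-- Transition kernel `P(π)` of the MDP with Bernoulli treatments. -/
def kernel (Nbr : Fin n → Finset (Fin n)) (f : Fin n → Bool → Bool → ℝ → ℝ)
    (π : Fin n → ℝ) (y y' : State n) : ℝ :=
  ∏ i, if y' i then succProb Nbr f π y i else 1 - succProb Nbr f π y i

/-- One-step pushforward `ν P(π)` of a distribution `ν` under the kernel. -/
def step (Nbr : Fin n → Finset (Fin n)) (f : Fin n → Bool → Bool → ℝ → ℝ)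
    (π : Fin n → ℝ) (ν : State n → ℝ) : State n → ℝ :=
  fun y' => ∑ y, ν y * kernel Nbr f π y y'

/-- `ν` is a probability distribution on `{0,1}^n`. -/
def IsDist (ν : State n → ℝ) : Prop := (∀ y, 0 ≤ ν y) ∧ ∑ y, ν y = 1

/-- `μ` is a stationary probability distribution for the kernel. -/
def IsStationary (Nbr : Fin n → Finset (Fin n)) (f : Fin n → Bool → Bool → ℝ → ℝ)
    (π : Fin n → ℝ) (μ : State n → ℝ) : Prop :=
  IsDist μ ∧ step Nbr f π μ = μ

/-- Expectation of `g` under the (finitely supported) distribution `ν`. -/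
def expect (ν : State n → ℝ) (g : State n → ℝ) : ℝ := ∑ y, ν y * g y

/-- `γ` is a coupling of `ν₁` and `ν₂`. -/
def IsCoupling (γ : State n × State n → ℝ) (ν₁ ν₂ : State n → ℝ) : Prop :=
  (∀ p, 0 ≤ γ p) ∧ (∀ x, ∑ y, γ (x, y) = ν₁ x) ∧ (∀ y, ∑ x, γ (x, y) = ν₂ y)

/-- `∑ i |x_i - y_i|` for binary vectors. -/
def hamming (x y : State n) : ℝ := ∑ i : Fin n, (if x i = y i then (0:ℝ) else 1)

/-- The `L1`-Wasserstein distance between two distributions on `{0,1}^n`. -/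
def WL1 (ν₁ ν₂ : State n → ℝ) : ℝ :=
  sInf {c | ∃ γ, IsCoupling γ ν₁ ν₂ ∧ c = ∑ p : State n × State n, γ p * hamming p.1 p.2}

/-- `∑_{j ∈ 𝒩_i} |x_j - y_j|` for binary vectors. -/
def nbrDiff (Nbr : Fin n → Finset (Fin n)) (i : Fin n) (x y : State n) : ℝ :=
  ∑ j ∈ Nbr i, (if x j = y j then (0:ℝ) else 1)

/-- The graph-dependent Wasserstein distance `W_{d_{E,k}}`. -/
def WdE (Nbr : Fin n → Finset (Fin n)) (k : ℕ) (ν₁ ν₂ : State n → ℝ) : ℝ :=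
  sInf {c | ∃ γ, IsCoupling γ ν₁ ν₂ ∧
    c = ⨆ i : Fin n,
      (∑ p : State n × State n, γ p * (nbrDiff Nbr i p.1 p.2) ^ k) ^ ((k : ℝ)⁻¹)}

/-- Multilinear extension of `f i` to probabilities `p, w ∈ [0,1]`:
`f_i(p,w,z) = a_i(z) + b_i(z) w + c_i(z) p + d_i(z) w p`. -/
def fext (f : Fin n → Bool → Bool → ℝ → ℝ) (i : Fin n) (p w z : ℝ) : ℝ :=
  f i false false z + (f i false true z - f i false false z) * w +
    (f i true false z - f i false false z) * p +
    (f i true true z - f i false true z - f i true false z + f i false false z) * w * p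

/-- `Q_i = ∑_{j ∈ 𝒩_i} P_j`. -/
def mfQ (Nbr : Fin n → Finset (Fin n)) (P : Fin n → ℝ) (i : Fin n) : ℝ := ∑ j ∈ Nbr i, P j

/-- One step of the mean-field dynamical system. -/
def mfStep (Nbr : Fin n → Finset (Fin n)) (f : Fin n → Bool → Bool → ℝ → ℝ)
    (π : Fin n → ℝ) (P : Fin n → ℝ) : Fin n → ℝ :=
  fun i => fext f i (P i) (π i) (mfQ Nbr P i)

/-- `P` is a fixed point of the mean-field dynamical system, lying in `[0,1]^n`. -/
def IsMFFixed (Nbr : Fin n → Finset (Fin n)) (f : Fin n → Bool → Bool → ℝ → ℝ)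
    (π : Fin n → ℝ) (P : Fin n → ℝ) : Prop :=
  (∀ i, P i ∈ Set.Icc (0:ℝ) 1) ∧ mfStep Nbr f π P = P

/-- Law of a vector of independent Bernoulli(P i) coordinates. -/
def prodLaw (P : Fin n → ℝ) (y : State n) : ℝ := ∏ i, if y i then P i else 1 - P i

/-- Probability of the treatment vector `w` under independent Bernoulli(π i). -/
def wProb (π : Fin n → ℝ) (w : State n) : ℝ := ∏ i, if w i then π i else 1 - π i

/-- Conditional probability of the next state `y'` given state `y` and treatments `w`. -/
def condProb (Nbr : Fin n → Finset (Fin n)) (f : Fin n → Bool → Bool → ℝ → ℝ)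
    (y w y' : State n) : ℝ :=
  ∏ i, if y' i then f i (y i) (w i) (zc Nbr y i) else 1 - f i (y i) (w i) (zc Nbr y i)

/-- Probability of the trajectory `(Y_1, …, Y_{T+1}; W_1, …, W_T)` (indexed from `0` in Lean)
of the MDP with Bernoulli treatments, with initial distribution `ν₀`. -/
def trajProb (Nbr : Fin n → Finset (Fin n)) (f : Fin n → Bool → Bool → ℝ → ℝ)
    (π : Fin n → ℝ) (T : ℕ) (ν₀ : State n → ℝ)
    (Y : Fin (T + 1) → State n) (W : Fin T → State n) : ℝ :=
  ν₀ (Y 0) * ∏ t : Fin T, wProb π (W t) * condProb Nbr f (Y t.castSucc) (W t) (Y t.succ)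

/-- The estimator `f̂_i(y,w)` computed from the trajectory (convention `0/0 = 0`,
which is Lean's division). -/
def fhat {T : ℕ} (Y : Fin (T + 1) → State n) (W : Fin T → State n)
    (i : Fin n) (y w : Bool) : ℝ :=
  (∑ t : Fin T, if Y t.castSucc i = y ∧ W t i = w then (if Y t.succ i then (1:ℝ) else 0) else 0) /
  (∑ t : Fin T, if Y t.castSucc i = y ∧ W t i = w then (1:ℝ) else 0)

/-- The undirected-graph structure: symmetric neighborhoods without self-loops. -/
def GoodGraph (Nbr : Fin n → Finset (Fin n)) : Prop :=
  (∀ i j, i ∈ Nbr j ↔ j ∈ Nbr i) ∧ ∀ i, i ∉ Nbr i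

/-- `f` takes values strictly between 0 and 1. -/
def PosF (f : Fin n → Bool → Bool → ℝ → ℝ) : Prop :=
  ∀ i y w z, 0 ≤ z → f i y w z ∈ Set.Ioo (0:ℝ) 1

/-- The regularity assumptions: `L`-Lipschitzness in the third argument, the bound `B` on
the effect of the first argument, maximal degree `D`, and the contraction condition
`B + L·D ≤ C < 1`. -/
def Regular (Nbr : Fin n → Finset (Fin n)) (f : Fin n → Bool → Bool → ℝ → ℝ)
    (L B : ℝ) (D : ℕ) (C : ℝ) : Prop :=
  0 ≤ L ∧
  (∀ i y w z₁ z₂, 0 ≤ z₁ → 0 ≤ z₂ → |f i y w z₁ - f i y w z₂| ≤ L * |z₁ - z₂|) ∧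
  (∀ i w z, 0 ≤ z → |f i true w z - f i false w z| ≤ B) ∧
  (∀ i, (Nbr i).card ≤ D) ∧
  B + L * D ≤ C ∧ C < 1

/-- Adjacency matrix of the interference graph. -/
def adjMat (Nbr : Fin n → Finset (Fin n)) : Matrix (Fin n) (Fin n) ℝ :=
  Matrix.of fun i j => if j ∈ Nbr i then (1:ℝ) else 0


/-- Indicator of `Y_i = 1` as a real-valued function of the state. -/
def Yi (i : Fin n) (s : State n) : ℝ := if s i then 1 else 0

/-- `a_i(z) = f_i(0,0,z)`. -/
def aF (f : Fin n → Bool → Bool → ℝ → ℝ) (i : Fin n) (z : ℝ) : ℝ := f i false false z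

/-- `b_i(z) = f_i(0,1,z) - f_i(0,0,z)`. -/
def bF (f : Fin n → Bool → Bool → ℝ → ℝ) (i : Fin n) (z : ℝ) : ℝ :=
  f i false true z - f i false false z

/-- `c_i(z) = f_i(1,0,z) - f_i(0,0,z)`. -/
def cF (f : Fin n → Bool → Bool → ℝ → ℝ) (i : Fin n) (z : ℝ) : ℝ :=
  f i true false z - f i false false z

/-- `d_i(z) = f_i(1,1,z) - f_i(0,1,z) - f_i(1,0,z) + f_i(0,0,z)`. -/
def dF (f : Fin n → Bool → Bool → ℝ → ℝ) (i : Fin n) (z : ℝ) : ℝ :=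
  f i true true z - f i false true z - f i true false z + f i false false z

/-- `â_i` computed from the trajectory. -/
def ahat {T : ℕ} (Y : Fin (T + 1) → State n) (W : Fin T → State n) (i : Fin n) : ℝ :=
  fhat Y W i false false

/-- `b̂_i` computed from the trajectory. -/
def bhat {T : ℕ} (Y : Fin (T + 1) → State n) (W : Fin T → State n) (i : Fin n) : ℝ :=
  fhat Y W i false true - fhat Y W i false false

/-- `ĉ_i` computed from the trajectory. -/
def chat {T : ℕ} (Y : Fin (T + 1) → State n) (W : Fin T → State n) (i : Fin n) : ℝ :=
  fhat Y W i true false - fhat Y W i false false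

/-- `d̂_i` computed from the trajectory. -/
def dhat {T : ℕ} (Y : Fin (T + 1) → State n) (W : Fin T → State n) (i : Fin n) : ℝ :=
  fhat Y W i true true + fhat Y W i false false - fhat Y W i false true - fhat Y W i true false

/-- The plug-in estimator `τ̂_LDE(γ₁, γ₂)` of the long-term direct effect. -/
def ldeHat {T : ℕ} (Y : Fin (T + 1) → State n) (W : Fin T → State n) (γ₁ γ₂ : ℝ) : ℝ :=
  (1 / (n : ℝ)) * ∑ i : Fin n,
    ((ahat Y W i + bhat Y W i * γ₁) / (1 - chat Y W i - dhat Y W i * γ₁) -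
      (ahat Y W i + bhat Y W i * γ₂) / (1 - chat Y W i - dhat Y W i * γ₂))

/-- `P̂_i = (1/T) ∑_{t=1}^T Y_{it}`. -/
def Phat {T : ℕ} (Y : Fin (T + 1) → State n) (i : Fin n) : ℝ :=
  (∑ t : Fin T, if Y t.castSucc i then (1 : ℝ) else 0) / T

/-- The regression estimator `f̂'_i(y,w)_{δ_T}` of the derivative of `f_i` in its third
argument, computed from the trajectory (`Dr` is the degree bound `D_n`, `δ` is `δ_T`). -/
def fhatD (Nbr : Fin n → Finset (Fin n)) {T : ℕ}
    (Y : Fin (T + 1) → State n) (W : Fin T → State n)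
    (i : Fin n) (y w : Bool) (Dr δ : ℝ) : ℝ :=
  let ind : Fin T → ℝ := fun t => if Y t.castSucc i = y ∧ W t i = w then 1 else 0
  let cnt : ℝ := ∑ t, ind t
  let Ybar : ℝ := (∑ t, ind t * (if Y t.succ i then (1 : ℝ) else 0)) / cnt
  let Zbar : ℝ := (∑ t, ind t * zc Nbr (Y t.castSucc) i) / cnt
  (∑ t, ind t * ((if Y t.succ i then (1 : ℝ) else 0) - Ybar) * (zc Nbr (Y t.castSucc) i - Zbar)) /
    max (Dr * T * δ) (∑ t, ind t * (zc Nbr (Y t.castSucc) i - Zbar) ^ 2)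

/-- The plug-in estimator `τ̂_LTE(π + Δv, π)/Δ = (1/n)·𝟙ᵀ(M_η − D̂A − Ŵ_κ)⁻¹ û`
of the (rescaled) long-term total effect. -/
def lteHatOverDelta (Nbr : Fin n → Finset (Fin n)) (π v : Fin n → ℝ) {T : ℕ}
    (Y : Fin (T + 1) → State n) (W : Fin T → State n) (Dn : ℕ) (δ η κ : ℝ) : ℝ :=
  let Dh : Fin n → ℝ := fun i =>
    (1 - π i) * (1 - Phat Y i) * fhatD Nbr Y W i false false Dn δ +
      π i * (1 - Phat Y i) * fhatD Nbr Y W i false true Dn δ +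
      Phat Y i * (1 - π i) * fhatD Nbr Y W i true false Dn δ +
      Phat Y i * π i * fhatD Nbr Y W i true true Dn δ
  let ω : Fin n → ℝ := fun i => min (1 - κ) (chat Y W i + dhat Y W i * π i)
  let u : Fin n → ℝ := fun i => (bhat Y W i + dhat Y W i * Phat Y i) * v i
  let Mη : Matrix (Fin n) (Fin n) ℝ :=
    Matrix.diagonal fun i => max 1 (Dh i * Dn / (1 - η) + ω i)
  (1 / (n : ℝ)) *
    ∑ i : Fin n, ((Mη - Matrix.diagonal Dh * adjMat Nbr - Matrix.diagonal ω)⁻¹.mulVec u) i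

end MRT


end


noncomputable section AUX
set_option linter.unusedVariables false

namespace MRTAux
open MRT

variable {n : ℕ}

def ind (b : Bool) : ℝ := if b then 1 else 0

@[simp] lemma ind_true : ind true = 1 := rfl
@[simp] lemma ind_false : ind false = 0 := rfl

lemma sum_prod_bool (g : Fin n → Bool → ℝ) :
    ∑ y : State n, ∏ i, g i (y i) = ∏ i, (g i true + g i false) := by
  classical
  rw [← Fintype.prod_sum (ι := Fin n) (κ := fun _ => Bool) (f := g)]
  exact Finset.prod_congr rfl (fun i _ => by simp)

lemma K_single (Nbr : Fin n → Finset (Fin n)) (f : Fin n → Bool → Bool → ℝ → ℝ)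
    (πt : Fin n → ℝ) (y : State n) (j : Fin n) (ψ : Bool → ℝ) :
    ∑ y' : State n, kernel Nbr f πt y y' * ψ (y' j)
      = succProb Nbr f πt y j * ψ true + (1 - succProb Nbr f πt y j) * ψ false := by
  classical
  set s : Fin n → ℝ := succProb Nbr f πt y with hs
  have h1 : ∀ y' : State n, kernel Nbr f πt y y' * ψ (y' j)
      = ∏ i, ((if y' i then s i else 1 - s i) * (if i = j then ψ (y' i) else 1)) := by
    intro y'
    rw [Finset.prod_mul_distrib]
    congr 1
    rw [Finset.prod_ite_eq' Finset.univ j (fun i => ψ (y' i))]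
    simp
  rw [Finset.sum_congr rfl (fun y' _ => h1 y'), sum_prod_bool
    (fun i b => (if b then s i else 1 - s i) * (if i = j then ψ b else 1))]
  have h2 : ∀ i : Fin n,
      ((if (true : Bool) then s i else 1 - s i) * (if i = j then ψ true else 1) +
        (if (false : Bool) then s i else 1 - s i) * (if i = j then ψ false else 1))
      = if i = j then s j * ψ true + (1 - s j) * ψ false else 1 := by
    intro i
    by_cases hij : i = j
    · subst hij; simp
    · simp [hij]
  rw [Finset.prod_congr rfl (fun i _ => h2 i)]
  rw [Finset.prod_ite_eq' Finset.univ j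
    (fun _ => s j * ψ true + (1 - s j) * ψ false)]
  simp

end MRTAux

namespace MRTAux2
open MRT MRTAux

variable {n : ℕ}

lemma K_pair (Nbr : Fin n → Finset (Fin n)) (f : Fin n → Bool → Bool → ℝ → ℝ)
    (πt : Fin n → ℝ) (y : State n) {j k : Fin n} (hjk : j ≠ k) (ψ₁ ψ₂ : Bool → ℝ) :
    ∑ y' : State n, kernel Nbr f πt y y' * (ψ₁ (y' j) * ψ₂ (y' k))
      = (succProb Nbr f πt y j * ψ₁ true + (1 - succProb Nbr f πt y j) * ψ₁ false) *
        (succProb Nbr f πt y k * ψ₂ true + (1 - succProb Nbr f πt y k) * ψ₂ false) := by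
  classical
  set s : Fin n → ℝ := succProb Nbr f πt y with hs
  have h1 : ∀ y' : State n, kernel Nbr f πt y y' * (ψ₁ (y' j) * ψ₂ (y' k))
      = ∏ i, ((if y' i then s i else 1 - s i) *
          ((if i = j then ψ₁ (y' i) else 1) * (if i = k then ψ₂ (y' i) else 1))) := by
    intro y'
    rw [Finset.prod_mul_distrib, Finset.prod_mul_distrib]
    congr 1
    rw [Finset.prod_ite_eq' Finset.univ j (fun i => ψ₁ (y' i)),
      Finset.prod_ite_eq' Finset.univ k (fun i => ψ₂ (y' i))]
    simp
  rw [Finset.sum_congr rfl (fun y' _ => h1 y'), sum_prod_bool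
    (fun i b => (if b then s i else 1 - s i) *
      ((if i = j then ψ₁ b else 1) * (if i = k then ψ₂ b else 1)))]
  have h2 : ∀ i : Fin n,
      ((if (true : Bool) then s i else 1 - s i) *
          ((if i = j then ψ₁ true else 1) * (if i = k then ψ₂ true else 1)) +
        (if (false : Bool) then s i else 1 - s i) *
          ((if i = j then ψ₁ false else 1) * (if i = k then ψ₂ false else 1)))
      = (if i = j then s j * ψ₁ true + (1 - s j) * ψ₁ false else 1) *
        (if i = k then s k * ψ₂ true + (1 - s k) * ψ₂ false else 1) := by
    intro i
    by_cases hij : i = j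
    · subst hij
      have : ¬ (i = k) := hjk
      simp [this]
    · by_cases hik : i = k
      · subst hik; simp [hij]
      · simp [hij, hik]
  rw [Finset.prod_congr rfl (fun i _ => h2 i), Finset.prod_mul_distrib,
    Finset.prod_ite_eq' Finset.univ j (fun _ => s j * ψ₁ true + (1 - s j) * ψ₁ false),
    Finset.prod_ite_eq' Finset.univ k (fun _ => s k * ψ₂ true + (1 - s k) * ψ₂ false)]
  simp

lemma K_moment (Nbr : Fin n → Finset (Fin n)) (f : Fin n → Bool → Bool → ℝ → ℝ)
    (πt : Fin n → ℝ) (y : State n) (S : Finset (Fin n)) (c P : Fin n → ℝ) :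
    ∑ y' : State n, kernel Nbr f πt y y' * (∑ j ∈ S, c j * (ind (y' j) - P j))^2
      = (∑ j ∈ S, (c j)^2 * (succProb Nbr f πt y j * (1 - succProb Nbr f πt y j))) +
        (∑ j ∈ S, c j * (succProb Nbr f πt y j - P j))^2 := by
  classical
  set s : Fin n → ℝ := succProb Nbr f πt y with hs
  set m : Fin n → ℝ := fun j => c j * (s j - P j) with hm
  set v : Fin n → ℝ := fun j => s j * (c j * (1 - P j))^2 + (1 - s j) * (c j * (0 - P j))^2
    with hv
  have expand : ∀ y' : State n, (∑ j ∈ S, c j * (ind (y' j) - P j))^2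
      = ∑ j ∈ S, ∑ k ∈ S, (c j * (ind (y' j) - P j)) * (c k * (ind (y' k) - P k)) := by
    intro y'
    rw [sq, Finset.sum_mul_sum]
  calc ∑ y' : State n, kernel Nbr f πt y y' * (∑ j ∈ S, c j * (ind (y' j) - P j))^2
      = ∑ j ∈ S, ∑ k ∈ S, ∑ y' : State n,
          kernel Nbr f πt y y' * ((c j * (ind (y' j) - P j)) * (c k * (ind (y' k) - P k))) := by
        rw [Finset.sum_congr rfl (fun y' _ => by rw [expand y'])]
        simp only [Finset.mul_sum]
        rw [Finset.sum_comm]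
        exact Finset.sum_congr rfl fun j _ => Finset.sum_comm
    _ = ∑ j ∈ S, ∑ k ∈ S, (if j = k then v j else m j * m k) := by
        refine Finset.sum_congr rfl (fun j _ => Finset.sum_congr rfl (fun k _ => ?_))
        by_cases hjk : j = k
        · subst hjk
          simp only [if_pos rfl]
          have := K_single Nbr f πt y j
            (fun b => (c j * (ind b - P j)) * (c j * (ind b - P j)))
          rw [this]
          simp only [hv, ind_true, ind_false]
          norm_num
          ring_nf
          simp only [hs]
          ring
        · simp only [if_neg hjk]
          have := K_pair Nbr f πt y hjk
            (fun b => c j * (ind b - P j)) (fun b => c k * (ind b - P k))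
          rw [this]
          simp only [hm, ind_true, ind_false]
          ring
    _ = (∑ j ∈ S, (c j)^2 * (s j * (1 - s j))) + (∑ j ∈ S, m j)^2 := by
        have h3 : ∀ j ∈ S, ∑ k ∈ S, (if j = k then v j else m j * m k)
            = (∑ k ∈ S, m j * m k) + ((c j)^2 * (s j * (1 - s j))) := by
          intro j hj
          have : ∀ k ∈ S, (if j = k then v j else m j * m k)
              = m j * m k + (if j = k then v j - m j * m j else 0) := by
            intro k hk
            by_cases hjk : j = k
            · subst hjk; simp
            · simp [hjk]
          rw [Finset.sum_congr rfl this, Finset.sum_add_distrib,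
            Finset.sum_ite_eq S j (fun _ => v j - m j * m j), if_pos hj]
          have hvm : v j - m j * m j = (c j)^2 * (s j * (1 - s j)) := by
            simp only [hv, hm]; ring
          rw [hvm]
        rw [Finset.sum_congr rfl h3, Finset.sum_add_distrib]
        rw [sq, Finset.sum_mul_sum]
        ring
    _ = _ := by rw [hm]

end MRTAux2

namespace MRTAuxN
open MRT
variable {n : ℕ}

def N2 (μ g : State n → ℝ) : ℝ := Real.sqrt (∑ y, μ y * (g y)^2)

lemma N2_nonneg (μ g : State n → ℝ) : 0 ≤ N2 μ g := Real.sqrt_nonneg _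

lemma N2_sq (μ : State n → ℝ) (hμ : ∀ y, 0 ≤ μ y) (g : State n → ℝ) :
    (N2 μ g)^2 = ∑ y, μ y * (g y)^2 :=
  Real.sq_sqrt (Finset.sum_nonneg fun y _ => mul_nonneg (hμ y) (sq_nonneg _))

lemma N2_le (μ g : State n → ℝ) {a : ℝ} (ha : 0 ≤ a)
    (h : ∑ y, μ y * (g y)^2 ≤ a^2) : N2 μ g ≤ a := by
  calc N2 μ g ≤ Real.sqrt (a^2) := Real.sqrt_le_sqrt h
  _ = a := Real.sqrt_sq ha

lemma N2_mono (μ : State n → ℝ) (hμ : ∀ y, 0 ≤ μ y) {g h : State n → ℝ}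
    (hgh : ∀ y, |g y| ≤ |h y|) : N2 μ g ≤ N2 μ h := by
  apply Real.sqrt_le_sqrt
  refine Finset.sum_le_sum fun y _ => mul_le_mul_of_nonneg_left ?_ (hμ y)
  calc (g y)^2 = |g y|^2 := (sq_abs _).symm
  _ ≤ |h y|^2 := by exact pow_le_pow_left₀ (abs_nonneg _) (hgh y) 2
  _ = (h y)^2 := sq_abs _

lemma N2_abs (μ : State n → ℝ) (g : State n → ℝ) :
    N2 μ (fun y => |g y|) = N2 μ g := by
  unfold N2; congr 1; exact Finset.sum_congr rfl fun y _ => by rw [sq_abs]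

lemma N2_smul (μ : State n → ℝ) (hμ : ∀ y, 0 ≤ μ y) (b : ℝ) (g : State n → ℝ) :
    N2 μ (fun y => b * g y) = |b| * N2 μ g := by
  unfold N2
  rw [show ∑ y, μ y * (b * g y)^2 = b^2 * ∑ y, μ y * (g y)^2 by rw [Finset.mul_sum]; exact Finset.sum_congr rfl fun y _ => by ring]
  rw [Real.sqrt_mul (sq_nonneg b), Real.sqrt_sq_eq_abs]

lemma N2_add_le (μ : State n → ℝ) (hμ : ∀ y, 0 ≤ μ y) (g h : State n → ℝ) :
    N2 μ (fun y => g y + h y) ≤ N2 μ g + N2 μ h := by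
  have hcs : ∑ y, μ y * (g y * h y) ≤ N2 μ g * N2 μ h := by
    have h1 : (∑ y, (Real.sqrt (μ y) * g y) * (Real.sqrt (μ y) * h y))^2
        ≤ (∑ y, (Real.sqrt (μ y) * g y)^2) * (∑ y, (Real.sqrt (μ y) * h y)^2) :=
      Finset.sum_mul_sq_le_sq_mul_sq _ _ _
    have e1 : ∀ y : State n, (Real.sqrt (μ y) * g y) * (Real.sqrt (μ y) * h y)
        = μ y * (g y * h y) := by
      intro y
      have : Real.sqrt (μ y) * Real.sqrt (μ y) = μ y := Real.mul_self_sqrt (hμ y)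
      calc (Real.sqrt (μ y) * g y) * (Real.sqrt (μ y) * h y)
          = (Real.sqrt (μ y) * Real.sqrt (μ y)) * (g y * h y) := by ring
        _ = μ y * (g y * h y) := by rw [this]
    have e2 : ∀ (u : State n → ℝ) (y : State n), (Real.sqrt (μ y) * u y)^2 = μ y * (u y)^2 := by
      intro u y
      rw [mul_pow, Real.sq_sqrt (hμ y)]
    rw [Finset.sum_congr rfl (fun y _ => e1 y),
      Finset.sum_congr rfl (fun y _ => e2 g y),
      Finset.sum_congr rfl (fun y _ => e2 h y)] at h1
    calc ∑ y, μ y * (g y * h y) ≤ |∑ y, μ y * (g y * h y)| := le_abs_self _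
    _ = Real.sqrt ((∑ y, μ y * (g y * h y))^2) := (Real.sqrt_sq_eq_abs _).symm
    _ ≤ Real.sqrt ((∑ y, μ y * (g y)^2) * (∑ y, μ y * (h y)^2)) := Real.sqrt_le_sqrt h1
    _ = N2 μ g * N2 μ h := Real.sqrt_mul
        (Finset.sum_nonneg fun y _ => mul_nonneg (hμ y) (sq_nonneg _)) _
  apply N2_le _ _ (add_nonneg (N2_nonneg μ g) (N2_nonneg μ h))
  have : ∑ y, μ y * (g y + h y)^2
      = (∑ y, μ y * (g y)^2) + 2 * (∑ y, μ y * (g y * h y)) + (∑ y, μ y * (h y)^2) := by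
    rw [Finset.mul_sum, ← Finset.sum_add_distrib, ← Finset.sum_add_distrib]
    exact Finset.sum_congr rfl fun y _ => by ring
  rw [this]
  have hg := N2_sq μ hμ g
  have hh := N2_sq μ hμ h
  nlinarith [hcs, N2_nonneg μ g, N2_nonneg μ h]

lemma N2_sum_le {ι : Type*} (μ : State n → ℝ) (hμ : ∀ y, 0 ≤ μ y) (S : Finset ι)
    (g : ι → State n → ℝ) :
    N2 μ (fun y => ∑ j ∈ S, g j y) ≤ ∑ j ∈ S, N2 μ (g j) := by
  classical
  induction S using Finset.cons_induction with
  | empty => simp [N2]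
  | cons a S ha ih =>
    rw [Finset.sum_cons]
    calc N2 μ (fun y => ∑ j ∈ Finset.cons a S ha, g j y)
        = N2 μ (fun y => g a y + ∑ j ∈ S, g j y) := by
          congr 1; funext y; rw [Finset.sum_cons]
      _ ≤ N2 μ (g a) + N2 μ (fun y => ∑ j ∈ S, g j y) := N2_add_le μ hμ _ _
      _ ≤ N2 μ (g a) + ∑ j ∈ S, N2 μ (g j) := by linarith [ih]

lemma abs_expect_le_N2 (μ : State n → ℝ) (hμ : ∀ y, 0 ≤ μ y) (hμ1 : ∑ y, μ y = 1)
    (g : State n → ℝ) : |∑ y, μ y * g y| ≤ N2 μ g := by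
  have h1 : (∑ y, (Real.sqrt (μ y)) * (Real.sqrt (μ y) * g y))^2
      ≤ (∑ y, (Real.sqrt (μ y))^2) * (∑ y, (Real.sqrt (μ y) * g y)^2) :=
    Finset.sum_mul_sq_le_sq_mul_sq _ _ _
  have e1 : ∀ y : State n, (Real.sqrt (μ y)) * (Real.sqrt (μ y) * g y) = μ y * g y := by
    intro y
    rw [← mul_assoc, Real.mul_self_sqrt (hμ y)]
  have e2 : ∀ y : State n, (Real.sqrt (μ y))^2 = μ y := fun y => Real.sq_sqrt (hμ y)
  have e3 : ∀ y : State n, (Real.sqrt (μ y) * g y)^2 = μ y * (g y)^2 := by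
    intro y; rw [mul_pow, Real.sq_sqrt (hμ y)]
  rw [Finset.sum_congr rfl (fun y _ => e1 y), Finset.sum_congr rfl (fun y _ => e2 y),
    Finset.sum_congr rfl (fun y _ => e3 y), hμ1, one_mul] at h1
  calc |∑ y, μ y * g y| = Real.sqrt ((∑ y, μ y * g y)^2) := (Real.sqrt_sq_eq_abs _).symm
  _ ≤ N2 μ g := Real.sqrt_le_sqrt h1

end MRTAuxN
namespace MRTMain
open MRT MRTAux MRTAux2 MRTAuxN

variable {n : ℕ}

def gamD (f : Fin n → Bool → Bool → ℝ → ℝ) (πt q : Fin n → ℝ) (j : Fin n) : ℝ :=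
  πt j * (f j true true (q j) - f j false true (q j)) +
    (1 - πt j) * (f j true false (q j) - f j false false (q j))

def betD (Nbr : Fin n → Finset (Fin n)) (f : Fin n → Bool → Bool → ℝ → ℝ)
    (πt q : Fin n → ℝ) (j : Fin n) (y : State n) : ℝ :=
  succProb Nbr f πt y j -
    (πt j * f j (y j) true (q j) + (1 - πt j) * f j (y j) false (q j))

/-- Coordinate-discrepancy sum `∑_{j∈𝒩_i} c_j (y_j - P_j)`. -/
def Xc (Nbr : Fin n → Finset (Fin n)) (P : Fin n → ℝ) (i : Fin n) (c : Fin n → ℝ)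
    (y : State n) : ℝ := ∑ j ∈ Nbr i, c j * (ind (y j) - P j)

set_option maxHeartbeats 2000000 in
lemma per_measure
    (Nbr : Fin n → Finset (Fin n)) (f : Fin n → Bool → Bool → ℝ → ℝ)
    (πt : Fin n → ℝ) (L B C : ℝ) (D : ℕ)
    (hf : PosF f) (hπ : ∀ i, πt i ∈ Set.Ioo (0:ℝ) 1)
    (hL : 0 ≤ L)
    (hLip : ∀ i y w z₁ z₂, 0 ≤ z₁ → 0 ≤ z₂ → |f i y w z₁ - f i y w z₂| ≤ L * |z₁ - z₂|)
    (hB : ∀ i w z, 0 ≤ z → |f i true w z - f i false w z| ≤ B)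
    (hD : ∀ i, (Nbr i).card ≤ D)
    (hC : B + L * D ≤ C) (hC1 : C < 1)
    (μ : State n → ℝ) (hμ : IsStationary Nbr f πt μ)
    (P : Fin n → ℝ) (hP : IsMFFixed Nbr f πt P) (i : Fin n) :
    |expect μ (Yi i) - P i| ≤ L * Real.sqrt ((D : ℝ) / (4 * (1 - C^2))) / (1 - B) := by
  classical
  obtain ⟨⟨hμ0, hμ1⟩, hstat⟩ := hμ
  obtain ⟨hP01, hPfix⟩ := hP
  have hDnn : (0:ℝ) ≤ (D:ℝ) := Nat.cast_nonneg D
  have hB0 : 0 ≤ B := (abs_nonneg _).trans (hB i true 0 le_rfl)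
  have hC0 : 0 ≤ C := le_trans (by positivity) hC
  have hBC : B ≤ C := by nlinarith [mul_nonneg hL hDnn]
  have hB1 : B < 1 := lt_of_le_of_lt hBC hC1
  have h1C2 : 0 < 1 - C^2 := by nlinarith
  set A := Real.sqrt ((D:ℝ) / (4 * (1 - C^2))) with hA
  have hA0 : 0 ≤ A := Real.sqrt_nonneg _
  have hA2 : A^2 = (D:ℝ)/(4*(1-C^2)) := Real.sq_sqrt (by positivity)
  have hD4 : (D:ℝ)/4 = A^2*(1-C^2) := by rw [hA2]; field_simp
  have hq0 : ∀ j, 0 ≤ mfQ Nbr P j :=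
    fun j => Finset.sum_nonneg fun k _ => (hP01 k).1
  have hz0 : ∀ (y : State n) j, 0 ≤ zc Nbr y j :=
    fun y j => Finset.sum_nonneg fun k _ => by positivity
  have hπ0 : ∀ j, 0 ≤ πt j := fun j => (hπ j).1.le
  have hπ1 : ∀ j, πt j ≤ 1 := fun j => (hπ j).2.le
  set gam : Fin n → ℝ := gamD f πt (mfQ Nbr P) with hgam
  set bet : Fin n → State n → ℝ := betD Nbr f πt (mfQ Nbr P) with hbet
  -- succProb in [0,1]
  have h_s01 : ∀ (y : State n) j, 0 ≤ succProb Nbr f πt y j ∧ succProb Nbr f πt y j ≤ 1 := by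
    intro y j
    obtain ⟨ht0, ht1⟩ := hf j (y j) true (zc Nbr y j) (hz0 y j)
    obtain ⟨hfa0, hfa1⟩ := hf j (y j) false (zc Nbr y j) (hz0 y j)
    have := hπ0 j; have := hπ1 j
    constructor <;> [skip; skip] <;> · rw [succProb]; nlinarith
  -- |gam j| ≤ B
  have h_gam : ∀ j, |gam j| ≤ B := by
    intro j
    have b1 := hB j true (mfQ Nbr P j) (hq0 j)
    have b2 := hB j false (mfQ Nbr P j) (hq0 j)
    have habs : |gam j| ≤ πt j * |f j true true (mfQ Nbr P j) - f j false true (mfQ Nbr P j)| +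
        (1 - πt j) * |f j true false (mfQ Nbr P j) - f j false false (mfQ Nbr P j)| := by
      rw [hgam]
      unfold gamD
      refine (abs_add_le _ _).trans ?_
      rw [abs_mul, abs_mul, abs_of_nonneg (hπ0 j), abs_of_nonneg (show (0:ℝ) ≤ 1 - πt j by linarith [hπ1 j])]
    nlinarith [mul_le_mul_of_nonneg_left b1 (hπ0 j),
      mul_le_mul_of_nonneg_left b2 (by linarith [hπ1 j] : (0:ℝ) ≤ 1 - πt j),
      abs_nonneg (f j true true (mfQ Nbr P j) - f j false true (mfQ Nbr P j)),
      abs_nonneg (f j true false (mfQ Nbr P j) - f j false false (mfQ Nbr P j))]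
  have h_fix : ∀ j, fext f j (P j) (πt j) (mfQ Nbr P j) = P j := fun j => congrFun hPfix j
  -- exact decomposition
  have h_dec : ∀ (y : State n) j, succProb Nbr f πt y j - P j
      = gam j * (ind (y j) - P j) + bet j y := by
    intro y j
    have hfj := h_fix j
    simp only [fext] at hfj
    cases hyj : y j <;>
      · simp only [hbet, hgam]
        unfold betD gamD succProb
        simp only [hyj, ind_true, ind_false]
        linear_combination hfj
  -- bet bound
  have h_Zq : ∀ (y : State n) j, zc Nbr y j - mfQ Nbr P j = Xc Nbr P j (fun _ => 1) y := by
    intro y j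
    simp only [Xc, mfQ, one_mul, zc, ind, Finset.sum_sub_distrib]
  have h_bet : ∀ (y : State n) j, |bet j y| ≤ L * |Xc Nbr P j (fun _ => 1) y| := by
    intro y j
    have e1 : bet j y = πt j * (f j (y j) true (zc Nbr y j) - f j (y j) true (mfQ Nbr P j)) +
        (1 - πt j) * (f j (y j) false (zc Nbr y j) - f j (y j) false (mfQ Nbr P j)) := by
      simp only [hbet, betD, succProb]; ring
    have l1 := hLip j (y j) true (zc Nbr y j) (mfQ Nbr P j) (hz0 y j) (hq0 j)
    have l2 := hLip j (y j) false (zc Nbr y j) (mfQ Nbr P j) (hz0 y j) (hq0 j)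
    have habs : |bet j y| ≤ πt j * |f j (y j) true (zc Nbr y j) - f j (y j) true (mfQ Nbr P j)| +
        (1 - πt j) * |f j (y j) false (zc Nbr y j) - f j (y j) false (mfQ Nbr P j)| := by
      rw [e1]
      refine (abs_add_le _ _).trans ?_
      rw [abs_mul, abs_mul, abs_of_nonneg (hπ0 j), abs_of_nonneg (show (0:ℝ) ≤ 1 - πt j by linarith [hπ1 j])]
    have : |bet j y| ≤ L * |zc Nbr y j - mfQ Nbr P j| := by
      nlinarith [mul_le_mul_of_nonneg_left l1 (hπ0 j),
        mul_le_mul_of_nonneg_left l2 (by linarith [hπ1 j] : (0:ℝ) ≤ 1 - πt j),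
        abs_nonneg (f j (y j) true (zc Nbr y j) - f j (y j) true (mfQ Nbr P j)),
        abs_nonneg (f j (y j) false (zc Nbr y j) - f j (y j) false (mfQ Nbr P j))]
    rwa [h_Zq y j] at this
  -- stationarity transfer
  have h_trans : ∀ F : State n → ℝ, ∑ y, μ y * F y
      = ∑ y, μ y * ∑ y', kernel Nbr f πt y y' * F y' := by
    intro F
    calc ∑ y, μ y * F y = ∑ y, (step Nbr f πt μ) y * F y := by rw [hstat]
    _ = ∑ y, (∑ x, μ x * kernel Nbr f πt x y) * F y := rfl
    _ = ∑ x, μ x * ∑ y, kernel Nbr f πt x y * F y := by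
        simp only [Finset.sum_mul, Finset.mul_sum]
        rw [Finset.sum_comm]
        exact Finset.sum_congr rfl fun x _ => Finset.sum_congr rfl fun y _ => by ring
  -- the moment induction
  have h_mom : ∀ m : ℕ, ∀ (i' : Fin n) (c : Fin n → ℝ), (∀ j, |c j| ≤ 1) →
      ∑ y, μ y * (Xc Nbr P i' c y)^2 ≤ (A + C^m * D)^2 := by
    intro m
    induction m with
    | zero =>
      intro i' c hc
      have hpt : ∀ y : State n, μ y * (Xc Nbr P i' c y)^2 ≤ μ y * (D:ℝ)^2 := by
        intro y
        refine mul_le_mul_of_nonneg_left ?_ (hμ0 y)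
        have habs : |Xc Nbr P i' c y| ≤ (D:ℝ) := by
          calc |Xc Nbr P i' c y| ≤ ∑ j ∈ Nbr i', |c j * (ind (y j) - P j)| :=
            Finset.abs_sum_le_sum_abs _ _
          _ ≤ ∑ j ∈ Nbr i', 1 := by
            refine Finset.sum_le_sum fun j _ => ?_
            rw [abs_mul]
            have h1 : |ind (y j) - P j| ≤ 1 := by
              rw [abs_le]
              obtain ⟨hp0, hp1⟩ := hP01 j
              cases y j <;> simp [ind] <;> constructor <;> linarith
            calc |c j| * |ind (y j) - P j| ≤ 1 * 1 :=
              mul_le_mul (hc j) h1 (abs_nonneg _) zero_le_one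
            _ = 1 := by ring
          _ = (Nbr i').card := by simp
          _ ≤ (D:ℝ) := by exact_mod_cast hD i'
        calc (Xc Nbr P i' c y)^2 = |Xc Nbr P i' c y|^2 := (sq_abs _).symm
        _ ≤ (D:ℝ)^2 := pow_le_pow_left₀ (abs_nonneg _) habs 2
      calc ∑ y, μ y * (Xc Nbr P i' c y)^2 ≤ ∑ y, μ y * (D:ℝ)^2 :=
        Finset.sum_le_sum fun y _ => hpt y
      _ = (D:ℝ)^2 := by rw [← Finset.sum_mul, hμ1, one_mul]
      _ ≤ (A + C^0 * D)^2 := by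
        rw [pow_zero, one_mul]
        exact pow_le_pow_left₀ hDnn (by linarith) 2
    | succ m ih =>
      intro i' c hc
      set E := C^m * (D:ℝ) with hE
      have hE0 : 0 ≤ E := mul_nonneg (pow_nonneg hC0 m) hDnn
      have hAE0 : 0 ≤ A + E := by linarith
      -- N2 bound from ih
      have ihN2 : ∀ (i'' : Fin n) (c' : Fin n → ℝ), (∀ j, |c' j| ≤ 1) →
          N2 μ (Xc Nbr P i'' c') ≤ A + E := by
        intro i'' c' hc'
        exact N2_le μ _ hAE0 (ih i'' c' hc')
      set T : State n → ℝ := fun y => ∑ j ∈ Nbr i', c j * (succProb Nbr f πt y j - P j)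
        with hT
      have step1 : ∑ y, μ y * (Xc Nbr P i' c y)^2
          = ∑ y, μ y * ((∑ j ∈ Nbr i', (c j)^2 *
              (succProb Nbr f πt y j * (1 - succProb Nbr f πt y j))) + (T y)^2) := by
        rw [h_trans (fun y => (Xc Nbr P i' c y)^2)]
        refine Finset.sum_congr rfl fun y _ => ?_
        congr 1
        exact K_moment Nbr f πt y (Nbr i') c P
      have step2 : ∑ y, μ y * ((∑ j ∈ Nbr i', (c j)^2 *
            (succProb Nbr f πt y j * (1 - succProb Nbr f πt y j))) + (T y)^2)
          = (∑ y, μ y * (∑ j ∈ Nbr i', (c j)^2 *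
              (succProb Nbr f πt y j * (1 - succProb Nbr f πt y j))))
            + ∑ y, μ y * (T y)^2 := by
        rw [← Finset.sum_add_distrib]
        exact Finset.sum_congr rfl fun y _ => by ring
      -- first part ≤ D/4
      have hU : (∑ y, μ y * (∑ j ∈ Nbr i', (c j)^2 *
          (succProb Nbr f πt y j * (1 - succProb Nbr f πt y j)))) ≤ (D:ℝ)/4 := by
        have hptw : ∀ y : State n, (∑ j ∈ Nbr i', (c j)^2 *
            (succProb Nbr f πt y j * (1 - succProb Nbr f πt y j))) ≤ (D:ℝ)/4 := by
          intro y
          calc (∑ j ∈ Nbr i', (c j)^2 *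
              (succProb Nbr f πt y j * (1 - succProb Nbr f πt y j)))
              ≤ ∑ j ∈ Nbr i', (1/4 : ℝ) := by
                refine Finset.sum_le_sum fun j _ => ?_
                obtain ⟨hs0, hs1⟩ := h_s01 y j
                have hc2 : (c j)^2 ≤ 1 := by
                  rw [← sq_abs]
                  nlinarith [abs_nonneg (c j), hc j]
                nlinarith [sq_nonneg (c j), sq_nonneg (succProb Nbr f πt y j - 1/2)]
            _ = (Nbr i').card * (1/4 : ℝ) := by rw [Finset.sum_const, nsmul_eq_mul]
            _ ≤ (D:ℝ)/4 := by
                have : ((Nbr i').card : ℝ) ≤ (D:ℝ) := by exact_mod_cast hD i'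
                linarith
        calc ∑ y, μ y * (∑ j ∈ Nbr i', (c j)^2 *
            (succProb Nbr f πt y j * (1 - succProb Nbr f πt y j)))
            ≤ ∑ y, μ y * ((D:ℝ)/4) :=
              Finset.sum_le_sum fun y _ => mul_le_mul_of_nonneg_left (hptw y) (hμ0 y)
          _ = (D:ℝ)/4 := by rw [← Finset.sum_mul, hμ1, one_mul]
      -- second part: N2 T ≤ C (A + E)
      have hTdec : ∀ y : State n, T y = Xc Nbr P i' (fun j => c j * gam j) y +
          ∑ j ∈ Nbr i', (c j * bet j y) := by
        intro y
        rw [hT, Xc, ← Finset.sum_add_distrib]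
        refine Finset.sum_congr rfl fun j _ => ?_
        rw [h_dec y j]
        ring
      have hN2T : N2 μ T ≤ C * (A + E) := by
        have tri : N2 μ T ≤ N2 μ (Xc Nbr P i' (fun j => c j * gam j)) +
            N2 μ (fun y => ∑ j ∈ Nbr i', (c j * bet j y)) := by
          have : T = fun y => Xc Nbr P i' (fun j => c j * gam j) y +
              (fun y => ∑ j ∈ Nbr i', (c j * bet j y)) y := funext hTdec
          rw [this]
          exact N2_add_le μ hμ0 _ _
        have part1 : N2 μ (Xc Nbr P i' (fun j => c j * gam j)) ≤ B * (A + E) := by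
          set c' : Fin n → ℝ := fun j => if hBz : B = 0 then 0 else c j * gam j / B with hc'
          have hc'1 : ∀ j, |c' j| ≤ 1 := by
            intro j
            rw [hc']
            by_cases hBz : B = 0
            · simp [hBz]
            · simp only [dif_neg hBz]
              have hBpos : 0 < B := lt_of_le_of_ne hB0 (Ne.symm hBz)
              rw [abs_div, abs_of_pos hBpos, div_le_one hBpos, abs_mul]
              calc |c j| * |gam j| ≤ 1 * B :=
                mul_le_mul (hc j) (h_gam j) (abs_nonneg _) zero_le_one
              _ = B := one_mul B
          have heq : Xc Nbr P i' (fun j => c j * gam j) = fun y => B * Xc Nbr P i' c' y := by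
            funext y
            rw [Xc, Xc, Finset.mul_sum]
            refine Finset.sum_congr rfl fun j _ => ?_
            rw [hc']
            by_cases hBz : B = 0
            · have : gam j = 0 := by
                have := h_gam j
                rw [hBz] at this
                exact abs_nonpos_iff.mp this
              simp [hBz, this]
            · simp only [dif_neg hBz]
              field_simp
          rw [heq, N2_smul μ hμ0 B _, abs_of_nonneg hB0]
          exact mul_le_mul_of_nonneg_left (ihN2 i' c' hc'1) hB0
        have part2 : N2 μ (fun y => ∑ j ∈ Nbr i', (c j * bet j y)) ≤ L * (D:ℝ) * (A + E) := by
          calc N2 μ (fun y => ∑ j ∈ Nbr i', (c j * bet j y))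
              ≤ ∑ j ∈ Nbr i', N2 μ (fun y => c j * bet j y) :=
                N2_sum_le μ hμ0 _ _
            _ ≤ ∑ j ∈ Nbr i', L * (A + E) := by
                refine Finset.sum_le_sum fun j _ => ?_
                have hm : ∀ y : State n, |c j * bet j y| ≤
                    |L * Xc Nbr P j (fun _ => 1) y| := by
                  intro y
                  rw [abs_mul, abs_mul, abs_of_nonneg hL]
                  calc |c j| * |bet j y| ≤ 1 * (L * |Xc Nbr P j (fun _ => 1) y|) :=
                    mul_le_mul (hc j) (h_bet y j) (abs_nonneg _) zero_le_one
                  _ = L * |Xc Nbr P j (fun _ => 1) y| := one_mul _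
                calc N2 μ (fun y => c j * bet j y)
                    ≤ N2 μ (fun y => L * Xc Nbr P j (fun _ => 1) y) := N2_mono μ hμ0 hm
                  _ = L * N2 μ (Xc Nbr P j (fun _ => 1)) := by
                      rw [N2_smul μ hμ0 L _, abs_of_nonneg hL]
                  _ ≤ L * (A + E) := mul_le_mul_of_nonneg_left
                      (ihN2 j (fun _ => 1) (fun _ => by norm_num)) hL
            _ = (Nbr i').card * (L * (A + E)) := by rw [Finset.sum_const, nsmul_eq_mul]
            _ ≤ L * (D:ℝ) * (A + E) := by
                have h1 : ((Nbr i').card : ℝ) ≤ (D:ℝ) := by exact_mod_cast hD i'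
                have h2 : 0 ≤ L * (A + E) := mul_nonneg hL hAE0
                nlinarith
        calc N2 μ T ≤ B * (A + E) + L * (D:ℝ) * (A + E) := by linarith
        _ = (B + L * D) * (A + E) := by ring
        _ ≤ C * (A + E) := mul_le_mul_of_nonneg_right hC hAE0
      have hT2 : ∑ y, μ y * (T y)^2 ≤ (C * (A + E))^2 := by
        rw [← N2_sq μ hμ0 T]
        exact pow_le_pow_left₀ (N2_nonneg μ T) hN2T 2
      -- combine
      rw [step1, step2]
      have hfin : (D:ℝ)/4 + (C * (A + E))^2 ≤ (A + C^(m+1) * D)^2 := by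
        have hCE : C^(m+1) * (D:ℝ) = C * E := by rw [hE, pow_succ]; ring
        rw [hCE, hD4]
        nlinarith [mul_nonneg (mul_nonneg hA0 hE0) (mul_nonneg hC0
          (by linarith : (0:ℝ) ≤ 1 - C)), sq_nonneg (C*E)]
      linarith
  -- limit: N2 of neighborhood discrepancy ≤ A
  have h_XcA : ∀ i' : Fin n, N2 μ (Xc Nbr P i' (fun _ => 1)) ≤ A := by
    intro i'
    have hbd : ∀ m : ℕ, N2 μ (Xc Nbr P i' (fun _ => 1)) ≤ A + C^m * D := by
      intro m
      refine N2_le μ _ ?_ (h_mom m i' (fun _ => 1) (fun _ => by norm_num))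
      have : (0:ℝ) ≤ C^m * D := mul_nonneg (pow_nonneg hC0 m) hDnn
      linarith
    have hlim : Filter.Tendsto (fun m : ℕ => A + C^m * (D:ℝ)) Filter.atTop (nhds A) := by
      have h1 : Filter.Tendsto (fun m : ℕ => C^m) Filter.atTop (nhds 0) :=
        tendsto_pow_atTop_nhds_zero_of_lt_one hC0 hC1
      have h2 : Filter.Tendsto (fun m : ℕ => A + C^m * (D:ℝ)) Filter.atTop
          (nhds (A + 0 * D)) :=
        Filter.Tendsto.add tendsto_const_nhds (h1.mul_const _)
      simpa using h2
    exact ge_of_tendsto' hlim hbd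
  -- mean equation
  have hmean : expect μ (Yi i) = ∑ y, μ y * succProb Nbr f πt y i := by
    calc expect μ (Yi i) = ∑ y, μ y * Yi i y := rfl
    _ = ∑ y, μ y * ∑ y', kernel Nbr f πt y y' * Yi i y' := h_trans (Yi i)
    _ = ∑ y, μ y * succProb Nbr f πt y i := by
        refine Finset.sum_congr rfl fun y _ => ?_
        congr 1
        have := K_single Nbr f πt y i ind
        simp only [ind_true, ind_false] at this
        calc ∑ y', kernel Nbr f πt y y' * Yi i y'
            = ∑ y', kernel Nbr f πt y y' * ind (y' i) := rfl
          _ = succProb Nbr f πt y i * 1 + (1 - succProb Nbr f πt y i) * 0 := this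
          _ = succProb Nbr f πt y i := by ring
  -- key equation
  have hkey : expect μ (Yi i) - P i = gam i * (expect μ (Yi i) - P i) +
      ∑ y, μ y * bet i y := by
    have e1 : expect μ (Yi i) - P i = ∑ y, μ y * (succProb Nbr f πt y i - P i) := by
      rw [hmean]
      rw [show ∑ y, μ y * (succProb Nbr f πt y i - P i)
        = (∑ y, μ y * succProb Nbr f πt y i) - (∑ y, μ y) * P i by
          rw [Finset.sum_mul, ← Finset.sum_sub_distrib]
          exact Finset.sum_congr rfl fun y _ => by ring]
      rw [hμ1]; ring
    have e2 : ∀ y : State n, μ y * (succProb Nbr f πt y i - P i)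
        = gam i * (μ y * (ind (y i) - P i)) + μ y * bet i y := by
      intro y
      rw [h_dec y i]
      ring
    have h3 : ∑ y, μ y * (ind (y i) - P i) = expect μ (Yi i) - P i := by
      have h4 : ∑ y, μ y * (ind (y i) - P i) = (∑ y, μ y * ind (y i)) - (∑ y, μ y) * P i := by
        rw [Finset.sum_mul, ← Finset.sum_sub_distrib]
        exact Finset.sum_congr rfl fun y _ => by ring
      rw [h4, hμ1]
      have h5 : ∑ y, μ y * ind (y i) = expect μ (Yi i) := rfl
      rw [h5]
      ring
    have eS : ∑ y, μ y * (succProb Nbr f πt y i - P i)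
        = gam i * (expect μ (Yi i) - P i) + ∑ y, μ y * bet i y := by
      rw [Finset.sum_congr rfl fun y _ => e2 y, Finset.sum_add_distrib, ← Finset.mul_sum, h3]
    exact e1.trans eS
  -- conclude
  have hbetsum : |∑ y, μ y * bet i y| ≤ L * A := by
    calc |∑ y, μ y * bet i y| ≤ ∑ y, |μ y * bet i y| := Finset.abs_sum_le_sum_abs _ _
    _ = ∑ y, μ y * |bet i y| := by
        refine Finset.sum_congr rfl fun y _ => ?_
        rw [abs_mul, abs_of_nonneg (hμ0 y)]
    _ ≤ N2 μ (fun y => |bet i y|) := by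
        have := abs_expect_le_N2 μ hμ0 hμ1 (fun y => |bet i y|)
        have hnn : 0 ≤ ∑ y, μ y * |bet i y| :=
          Finset.sum_nonneg fun y _ => mul_nonneg (hμ0 y) (abs_nonneg _)
        rwa [abs_of_nonneg hnn] at this
    _ = N2 μ (bet i) := N2_abs μ _
    _ ≤ N2 μ (fun y => L * Xc Nbr P i (fun _ => 1) y) := by
        refine N2_mono μ hμ0 fun y => ?_
        rw [abs_mul, abs_of_nonneg hL]
        exact h_bet y i
    _ = L * N2 μ (Xc Nbr P i (fun _ => 1)) := by rw [N2_smul μ hμ0 L _, abs_of_nonneg hL]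
    _ ≤ L * A := mul_le_mul_of_nonneg_left (h_XcA i) hL
  have hgabs : |gam i * (expect μ (Yi i) - P i)| ≤ B * |expect μ (Yi i) - P i| := by
    rw [abs_mul]
    exact mul_le_mul_of_nonneg_right (h_gam i) (abs_nonneg _)
  have hineq : |expect μ (Yi i) - P i| ≤ B * |expect μ (Yi i) - P i| + L * A := by
    calc |expect μ (Yi i) - P i| = |gam i * (expect μ (Yi i) - P i) +
        ∑ y, μ y * bet i y| := by rw [← hkey]
    _ ≤ |gam i * (expect μ (Yi i) - P i)| + |∑ y, μ y * bet i y| := abs_add_le _ _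
    _ ≤ B * |expect μ (Yi i) - P i| + L * A := add_le_add hgabs hbetsum
  rw [le_div_iff₀ (by linarith : (0:ℝ) < 1 - B)]
  nlinarith [hineq]

lemma final_alg (L B C : ℝ) (D : ℕ) (hL : 0 ≤ L) (hB0 : 0 ≤ B)
    (hC : B + L * D ≤ C) (hC1 : C < 1) :
    2 * (L * Real.sqrt ((D:ℝ) / (4 * (1 - C^2))) / (1 - B)) ≤
      Real.sqrt L * Real.sqrt C / (1 - C) := by
  have hDnn : (0:ℝ) ≤ (D:ℝ) := Nat.cast_nonneg D
  have hC0 : 0 ≤ C := le_trans (by positivity) hC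
  have hBC : B ≤ C := by nlinarith [mul_nonneg hL hDnn]
  have hB1 : B < 1 := lt_of_le_of_lt hBC hC1
  have h1B : (0:ℝ) < 1 - B := by linarith
  have h1C : (0:ℝ) < 1 - C := by linarith
  have h1C2 : (0:ℝ) < 1 - C^2 := by nlinarith
  set A := Real.sqrt ((D:ℝ) / (4 * (1 - C^2))) with hA
  have hA0 : 0 ≤ A := Real.sqrt_nonneg _
  have hA2 : A^2 = (D:ℝ) / (4 * (1 - C^2)) := Real.sq_sqrt (by positivity)
  have hLHS0 : 0 ≤ 2 * (L * A / (1 - B)) := by positivity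
  have hRHS0 : 0 ≤ Real.sqrt L * Real.sqrt C / (1 - C) := by positivity
  have hLD : L * (D:ℝ) ≤ C - B := by linarith
  have key : (C - B) * (1 - C) ≤ C * (1 + C) * (1 - B)^2 := by
    have k1 : C - B ≤ C * (1 - B) := by
      nlinarith [mul_nonneg hB0 (le_of_lt h1C)]
    have k2 : 1 - C ≤ (1 + C) * (1 - B) := by
      nlinarith [mul_nonneg hC0 (le_of_lt h1C)]
    calc (C - B) * (1 - C) ≤ (C * (1 - B)) * ((1 + C) * (1 - B)) :=
      mul_le_mul k1 k2 (le_of_lt h1C) (by positivity)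
    _ = C * (1 + C) * (1 - B)^2 := by ring
  have hsq : (2 * (L * A / (1 - B)))^2 ≤ (Real.sqrt L * Real.sqrt C / (1 - C))^2 := by
    have e1 : (2 * (L * A / (1 - B)))^2 = L^2 * (D:ℝ) / ((1 - C^2) * (1 - B)^2) := by
      rw [mul_pow, div_pow, mul_pow, hA2]
      field_simp
      ring
    have e2 : (Real.sqrt L * Real.sqrt C / (1 - C))^2 = L * C / (1 - C)^2 := by
      rw [div_pow, mul_pow, Real.sq_sqrt hL, Real.sq_sqrt hC0]
    rw [e1, e2, div_le_div_iff₀ (by positivity) (by positivity)]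
    have t1 : L^2 * (D:ℝ) * (1 - C)^2 ≤ L * (C - B) * (1 - C)^2 := by
      have h := mul_le_mul_of_nonneg_left hLD (mul_nonneg hL (sq_nonneg (1 - C)))
      nlinarith [h]
    have t2 : L * (C - B) * (1 - C)^2 ≤ L * (C * (1 + C) * (1 - B)^2) * (1 - C) := by
      have h := mul_le_mul_of_nonneg_left key (mul_nonneg hL (le_of_lt h1C))
      nlinarith [h]
    nlinarith [t1, t2]
  calc 2 * (L * A / (1 - B)) = Real.sqrt ((2 * (L * A / (1 - B)))^2) :=
    (Real.sqrt_sq hLHS0).symm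
  _ ≤ Real.sqrt ((Real.sqrt L * Real.sqrt C / (1 - C))^2) := Real.sqrt_le_sqrt hsq
  _ = Real.sqrt L * Real.sqrt C / (1 - C) := Real.sqrt_sq hRHS0

end MRTMain

end AUX


open MRT in
/-- the long-term total effect is close to its mean-field analogue:
`|τ_LTE(π+Δv, π) − τ̃_LTE(π+Δv, π)| ≤ √L √C/(1−C)`. -/
theorem lte_mean_field_approx
    (n : ℕ) (Nbr : Fin n → Finset (Fin n)) (f : Fin n → Bool → Bool → ℝ → ℝ)
    (π : Fin n → ℝ) (L B C : ℝ) (D : ℕ)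
    (hG : GoodGraph Nbr)
    (hf : PosF f)
    (hπ : ∀ i, π i ∈ Set.Ioo (0 : ℝ) 1)
    (hReg : Regular Nbr f L B D C)
    (Δ : ℝ) (v : Fin n → ℝ)
    (hπΔ : ∀ i, π i + Δ * v i ∈ Set.Ioo (0 : ℝ) 1)
    (μ μ' : State n → ℝ)
    (hμ : IsStationary Nbr f π μ)
    (hμ' : IsStationary Nbr f (fun i => π i + Δ * v i) μ')
    (P P' : Fin n → ℝ)
    (hP : IsMFFixed Nbr f π P)
    (hP' : IsMFFixed Nbr f (fun i => π i + Δ * v i) P') :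
    |(1 / (n : ℝ)) * ∑ i : Fin n, (expect μ' (Yi i) - expect μ (Yi i)) -
        (1 / (n : ℝ)) * ∑ i : Fin n, (P' i - P i)| ≤
      Real.sqrt L * Real.sqrt C / (1 - C) := by
  classical
  obtain ⟨hL, hLip, hBb, hD, hC, hC1⟩ := hReg
  have hRHS0 : 0 ≤ Real.sqrt L * Real.sqrt C / (1 - C) := by
    have h1C : (0:ℝ) < 1 - C := by linarith
    positivity
  rcases Nat.eq_zero_or_pos n with hn | hn
  · subst hn
    simpa using hRHS0
  have hB0 : (0:ℝ) ≤ B := (abs_nonneg _).trans (hBb ⟨0, hn⟩ true 0 le_rfl)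
  set K := L * Real.sqrt ((D:ℝ) / (4 * (1 - C^2))) / (1 - B) with hK
  have h1 : ∀ i, |expect μ' (Yi i) - P' i| ≤ K := fun i =>
    MRTMain.per_measure Nbr f (fun i => π i + Δ * v i) L B C D hf hπΔ hL hLip hBb hD hC hC1
      μ' hμ' P' hP' i
  have h2 : ∀ i, |expect μ (Yi i) - P i| ≤ K := fun i =>
    MRTMain.per_measure Nbr f π L B C D hf hπ hL hLip hBb hD hC hC1 μ hμ P hP i
  have hKnn : 0 ≤ K := le_trans (abs_nonneg _) (h2 ⟨0, hn⟩)
  have hre : (1 / (n : ℝ)) * ∑ i : Fin n, (expect μ' (Yi i) - expect μ (Yi i)) -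
      (1 / (n : ℝ)) * ∑ i : Fin n, (P' i - P i)
      = (1 / (n : ℝ)) * ∑ i : Fin n,
        ((expect μ' (Yi i) - P' i) - (expect μ (Yi i) - P i)) := by
    rw [← mul_sub, ← Finset.sum_sub_distrib]
    congr 1
    exact Finset.sum_congr rfl fun i _ => by ring
  have hnpos : (0:ℝ) < (n:ℝ) := by exact_mod_cast hn
  have hbound : |(1 / (n : ℝ)) * ∑ i : Fin n,
      ((expect μ' (Yi i) - P' i) - (expect μ (Yi i) - P i))| ≤ 2 * K := by
    rw [abs_mul, abs_of_nonneg (by positivity : (0:ℝ) ≤ 1 / (n:ℝ))]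
    have hs : |∑ i : Fin n, ((expect μ' (Yi i) - P' i) - (expect μ (Yi i) - P i))|
        ≤ ∑ i : Fin n, (2 * K) := by
      refine (Finset.abs_sum_le_sum_abs _ _).trans (Finset.sum_le_sum fun i _ => ?_)
      calc |(expect μ' (Yi i) - P' i) - (expect μ (Yi i) - P i)|
          ≤ |expect μ' (Yi i) - P' i| + |expect μ (Yi i) - P i| := abs_sub _ _
        _ ≤ K + K := add_le_add (h1 i) (h2 i)
        _ = 2 * K := by ring
    calc (1 / (n:ℝ)) * |∑ i : Fin n, ((expect μ' (Yi i) - P' i) - (expect μ (Yi i) - P i))|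
        ≤ (1 / (n:ℝ)) * ∑ i : Fin n, (2 * K) :=
          mul_le_mul_of_nonneg_left hs (by positivity)
      _ = (1 / (n:ℝ)) * ((n:ℝ) * (2 * K)) := by
          rw [Finset.sum_const, Finset.card_univ, Fintype.card_fin, nsmul_eq_mul]
      _ = 2 * K := by field_simp
  rw [hre]
  refine hbound.trans ?_
  rw [hK]
  exact MRTMain.final_alg L B C D hL hB0 hC hC1
end

section
/- Under the regularity assumptions, the transition kernel P(π) of the MDP with Bernoulli treatments is a contraction for the L1-Wasserstein distance: for any two probability distributions ν₁, ν₂ on {0,1}^n, W_{L1}(ν₁ P(π), ν₂ P(π)) ≤ C·W_{L1}(ν₁, ν₂). -/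
open Finset Filter Topology

section AuxContraction

open MRT Finset

variable {n : ℕ}

private lemma sum_prod_bool' (g : Fin n → Bool → ℝ) :
    ∑ y : State n, ∏ i, g i (y i) = ∏ i, (g i true + g i false) := by
  classical
  have h := Finset.prod_univ_sum (fun _ : Fin n => (Finset.univ : Finset Bool)) g
  rw [Fintype.piFinset_univ] at h
  rw [← h]
  exact Finset.prod_congr rfl fun i _ => by simp

private lemma sum_prod_bool2 (F : Fin n → Bool → Bool → ℝ) :
    ∑ x : State n, ∑ y : State n, ∏ i, F i (x i) (y i)
      = ∏ i, (F i true true + F i true false + (F i false true + F i false false)) := by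
  calc ∑ x : State n, ∑ y : State n, ∏ i, F i (x i) (y i)
      = ∑ x : State n, ∏ i, (F i (x i) true + F i (x i) false) :=
        Finset.sum_congr rfl fun x _ => sum_prod_bool' (fun i b => F i (x i) b)
    _ = ∏ i, (F i true true + F i true false + (F i false true + F i false false)) :=
        sum_prod_bool' (fun i a => F i a true + F i a false)

/-- Optimal coupling of `Bernoulli p` and `Bernoulli q`. -/
private def kap (p q : ℝ) (a b : Bool) : ℝ :=
  if a then (if b then min p q else p - min p q)
  else (if b then q - min p q else 1 - max p q)

private lemma kap_nonneg {p q : ℝ} (hp : p ∈ Set.Icc (0:ℝ) 1) (hq : q ∈ Set.Icc (0:ℝ) 1)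
    (a b : Bool) : 0 ≤ kap p q a b := by
  obtain ⟨hp0, hp1⟩ := hp; obtain ⟨hq0, hq1⟩ := hq
  cases a <;> cases b <;> simp [kap, le_min_iff, sub_nonneg, min_le_left, min_le_right,
    max_le_iff, hp0, hq0, hp1, hq1]

private lemma kap_margin_b (p q : ℝ) (a : Bool) :
    kap p q a true + kap p q a false = if a then p else 1 - p := by
  have h := min_add_max p q
  cases a <;> simp [kap] <;> linarith

private lemma kap_margin_a (p q : ℝ) (b : Bool) :
    kap p q true b + kap p q false b = if b then q else 1 - q := by
  have h := min_add_max p q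
  cases b <;> simp [kap] <;> linarith

private lemma kap_mass (p q : ℝ) :
    kap p q true true + kap p q true false + (kap p q false true + kap p q false false) = 1 := by
  have h := min_add_max p q
  simp [kap]; linarith

private lemma kap_cost (p q : ℝ) :
    kap p q true false + kap p q false true = |p - q| := by
  have h := min_add_max p q
  have h2 := max_sub_min_eq_abs' p q
  simp [kap]; linarith

private lemma zc_nonneg (Nbr : Fin n → Finset (Fin n)) (y : State n) (i : Fin n) :
    0 ≤ zc Nbr y i :=
  Finset.sum_nonneg fun j _ => by split <;> norm_num

private lemma succProb_mem {Nbr : Fin n → Finset (Fin n)} {f : Fin n → Bool → Bool → ℝ → ℝ}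
    {π : Fin n → ℝ} (hf : PosF f) (hπ : ∀ i, π i ∈ Set.Ioo (0:ℝ) 1)
    (x : State n) (i : Fin n) : succProb Nbr f π x i ∈ Set.Icc (0:ℝ) 1 := by
  obtain ⟨hπ0, hπ1⟩ := hπ i
  obtain ⟨ht0, ht1⟩ := hf i (x i) true _ (zc_nonneg Nbr x i)
  obtain ⟨hf0, hf1⟩ := hf i (x i) false _ (zc_nonneg Nbr x i)
  unfold succProb
  constructor <;> nlinarith

private lemma hamming_nonneg (x y : State n) : 0 ≤ hamming x y :=
  Finset.sum_nonneg fun i _ => by split <;> norm_num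

/-- Key analytic bound: the total variation of the coordinate success probabilities
is bounded by `C` times the Hamming distance. -/
private lemma key_bound {Nbr : Fin n → Finset (Fin n)} {f : Fin n → Bool → Bool → ℝ → ℝ}
    {π : Fin n → ℝ} {L B C : ℝ} {D : ℕ}
    (hG : GoodGraph Nbr) (hReg : Regular Nbr f L B D C)
    (hπ : ∀ i, π i ∈ Set.Ioo (0:ℝ) 1) (x y : State n) :
    ∑ i, |succProb Nbr f π x i - succProb Nbr f π y i| ≤ C * hamming x y := by
  classical
  obtain ⟨hL, hLip, hB, hD, hC, _⟩ := hReg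
  have hham0 : (0:ℝ) ≤ hamming x y := hamming_nonneg x y
  have hpt : ∀ i, |succProb Nbr f π x i - succProb Nbr f π y i| ≤
      B * (if x i = y i then 0 else 1) + L * nbrDiff Nbr i x y := by
    intro i
    have hzx0 : 0 ≤ zc Nbr x i := zc_nonneg Nbr x i
    have hzy0 : 0 ≤ zc Nbr y i := zc_nonneg Nbr y i
    have hnd0 : 0 ≤ nbrDiff Nbr i x y :=
      Finset.sum_nonneg fun j _ => by split <;> norm_num
    have hzd : |zc Nbr x i - zc Nbr y i| ≤ nbrDiff Nbr i x y := by
      have hzz : zc Nbr x i - zc Nbr y i =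
          ∑ j ∈ Nbr i, ((if x j then (1:ℝ) else 0) - (if y j then (1:ℝ) else 0)) := by
        rw [Finset.sum_sub_distrib]; rfl
      rw [hzz]
      refine (Finset.abs_sum_le_sum_abs _ _).trans ?_
      apply Finset.sum_le_sum
      intro j _
      by_cases h : x j = y j
      · simp [h]
      · cases hxj : x j <;> cases hyj : y j <;> simp_all
    have hw : ∀ w : Bool, |f i (x i) w (zc Nbr x i) - f i (y i) w (zc Nbr y i)| ≤
        B * (if x i = y i then 0 else 1) + L * nbrDiff Nbr i x y := by
      intro w
      have h1 : |f i (x i) w (zc Nbr x i) - f i (y i) w (zc Nbr x i)| ≤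
          B * (if x i = y i then 0 else 1) := by
        by_cases h : x i = y i
        · simp [h]
        · rw [if_neg h, mul_one]
          cases hxi : x i <;> cases hyi : y i
          · exact absurd (hxi.trans hyi.symm) h
          · rw [abs_sub_comm]; exact hB i w _ hzx0
          · exact hB i w _ hzx0
          · exact absurd (hxi.trans hyi.symm) h
      have h2 : |f i (y i) w (zc Nbr x i) - f i (y i) w (zc Nbr y i)| ≤
          L * nbrDiff Nbr i x y :=
        (hLip i (y i) w _ _ hzx0 hzy0).trans (mul_le_mul_of_nonneg_left hzd hL)
      calc |f i (x i) w (zc Nbr x i) - f i (y i) w (zc Nbr y i)|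
          ≤ |f i (x i) w (zc Nbr x i) - f i (y i) w (zc Nbr x i)| +
            |f i (y i) w (zc Nbr x i) - f i (y i) w (zc Nbr y i)| := abs_sub_le _ _ _
        _ ≤ B * (if x i = y i then 0 else 1) + L * nbrDiff Nbr i x y := by linarith
    obtain ⟨hπ0, hπ1⟩ := hπ i
    have hwt := hw true
    have hwf := hw false
    have expand : succProb Nbr f π x i - succProb Nbr f π y i
        = π i * (f i (x i) true (zc Nbr x i) - f i (y i) true (zc Nbr y i))
          + (1 - π i) * (f i (x i) false (zc Nbr x i) - f i (y i) false (zc Nbr y i)) := by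
      unfold succProb; ring
    rw [expand]
    have habs : |π i * (f i (x i) true (zc Nbr x i) - f i (y i) true (zc Nbr y i))
          + (1 - π i) * (f i (x i) false (zc Nbr x i) - f i (y i) false (zc Nbr y i))|
        ≤ π i * |f i (x i) true (zc Nbr x i) - f i (y i) true (zc Nbr y i)|
          + (1 - π i) * |f i (x i) false (zc Nbr x i) - f i (y i) false (zc Nbr y i)| := by
      refine (abs_add_le _ _).trans ?_
      rw [abs_mul, abs_mul, abs_of_nonneg hπ0.le, abs_of_nonneg (show (0:ℝ) ≤ 1 - π i by linarith)]
    refine habs.trans ?_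
    nlinarith [abs_nonneg (f i (x i) true (zc Nbr x i) - f i (y i) true (zc Nbr y i)),
      abs_nonneg (f i (x i) false (zc Nbr x i) - f i (y i) false (zc Nbr y i))]
  have hswap : ∑ i : Fin n, nbrDiff Nbr i x y
      = ∑ j : Fin n, ((Nbr j).card : ℝ) * (if x j = y j then 0 else 1) := by
    unfold nbrDiff
    calc ∑ i : Fin n, ∑ j ∈ Nbr i, (if x j = y j then (0:ℝ) else 1)
        = ∑ i : Fin n, ∑ j : Fin n, (if j ∈ Nbr i then (if x j = y j then (0:ℝ) else 1) else 0) := by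
          refine Finset.sum_congr rfl fun i _ => ?_
          rw [Finset.sum_ite_mem, Finset.univ_inter]
      _ = ∑ j : Fin n, ∑ i : Fin n, (if j ∈ Nbr i then (if x j = y j then (0:ℝ) else 1) else 0) :=
          Finset.sum_comm
      _ = ∑ j : Fin n, ((Nbr j).card : ℝ) * (if x j = y j then 0 else 1) := by
          refine Finset.sum_congr rfl fun j _ => ?_
          have h1 : ∀ i : Fin n, (if j ∈ Nbr i then (if x j = y j then (0:ℝ) else 1) else 0)
              = (if i ∈ Nbr j then (if x j = y j then (0:ℝ) else 1) else 0) := by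
            intro i
            by_cases h : j ∈ Nbr i
            · rw [if_pos h, if_pos ((hG.1 j i).mp h)]
            · rw [if_neg h, if_neg (fun h' => h ((hG.1 j i).mpr h'))]
          rw [Finset.sum_congr rfl fun i _ => h1 i, Finset.sum_ite_mem, Finset.univ_inter,
            Finset.sum_const, nsmul_eq_mul]
  have hswapD : ∑ i : Fin n, nbrDiff Nbr i x y ≤ (D : ℝ) * hamming x y := by
    rw [hswap]
    unfold hamming
    rw [Finset.mul_sum]
    apply Finset.sum_le_sum
    intro j _
    have : ((Nbr j).card : ℝ) ≤ (D : ℝ) := by exact_mod_cast hD j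
    have h0 : (0:ℝ) ≤ (if x j = y j then 0 else 1) := by split <;> norm_num
    exact mul_le_mul_of_nonneg_right this h0
  calc ∑ i, |succProb Nbr f π x i - succProb Nbr f π y i|
      ≤ ∑ i, (B * (if x i = y i then 0 else 1) + L * nbrDiff Nbr i x y) :=
        Finset.sum_le_sum fun i _ => hpt i
    _ = B * hamming x y + L * ∑ i, nbrDiff Nbr i x y := by
        rw [Finset.sum_add_distrib, ← Finset.mul_sum, ← Finset.mul_sum]; rfl
    _ ≤ B * hamming x y + L * ((D : ℝ) * hamming x y) := by
        have := mul_le_mul_of_nonneg_left hswapD hL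
        linarith
    _ = (B + L * D) * hamming x y := by ring
    _ ≤ C * hamming x y := mul_le_mul_of_nonneg_right hC hham0

/-- The main coupling construction: from a coupling of `ν₁, ν₂`, build a coupling of the
pushforwards whose cost is at most `C` times the cost of the original coupling. -/
private lemma coupling_step
    (Nbr : Fin n → Finset (Fin n)) (f : Fin n → Bool → Bool → ℝ → ℝ)
    (π : Fin n → ℝ) (L B C : ℝ) (D : ℕ)
    (hG : GoodGraph Nbr) (hf : PosF f) (hπ : ∀ i, π i ∈ Set.Ioo (0:ℝ) 1)
    (hReg : Regular Nbr f L B D C)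
    (ν₁ ν₂ : State n → ℝ) (γ : State n × State n → ℝ)
    (hγ : IsCoupling γ ν₁ ν₂) :
    ∃ Γ : State n × State n → ℝ, IsCoupling Γ (step Nbr f π ν₁) (step Nbr f π ν₂) ∧
      ∑ p : State n × State n, Γ p * hamming p.1 p.2 ≤
        C * ∑ p : State n × State n, γ p * hamming p.1 p.2 := by
  classical
  obtain ⟨hγ0, hγ1, hγ2⟩ := hγ
  set sp : State n → Fin n → ℝ := fun x i => succProb Nbr f π x i with hsp
  have hsp01 : ∀ x i, sp x i ∈ Set.Icc (0:ℝ) 1 := fun x i => succProb_mem hf hπ x i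
  refine ⟨fun q => ∑ r : State n × State n, γ r *
      ∏ i, kap (sp r.1 i) (sp r.2 i) (q.1 i) (q.2 i), ⟨?_, ?_, ?_⟩, ?_⟩
  · intro q
    exact Finset.sum_nonneg fun r _ => mul_nonneg (hγ0 r)
      (Finset.prod_nonneg fun i _ => kap_nonneg (hsp01 r.1 i) (hsp01 r.2 i) _ _)
  · intro x'
    have hinner : ∀ r : State n × State n,
        ∑ y' : State n, ∏ i, kap (sp r.1 i) (sp r.2 i) (x' i) (y' i)
          = kernel Nbr f π r.1 x' := by
      intro r
      rw [sum_prod_bool' (fun i b => kap (sp r.1 i) (sp r.2 i) (x' i) b)]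
      unfold kernel
      exact Finset.prod_congr rfl fun i _ => kap_margin_b _ _ _
    calc ∑ y' : State n, ∑ r : State n × State n,
            γ r * ∏ i, kap (sp r.1 i) (sp r.2 i) (x' i) (y' i)
        = ∑ r : State n × State n,
            γ r * ∑ y' : State n, ∏ i, kap (sp r.1 i) (sp r.2 i) (x' i) (y' i) := by
          rw [Finset.sum_comm]
          exact Finset.sum_congr rfl fun r _ => (Finset.mul_sum _ _ _).symm
      _ = ∑ r : State n × State n, γ r * kernel Nbr f π r.1 x' := by
          exact Finset.sum_congr rfl fun r _ => by rw [hinner r]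
      _ = ∑ x : State n, ν₁ x * kernel Nbr f π x x' := by
          rw [Fintype.sum_prod_type]
          refine Finset.sum_congr rfl fun x _ => ?_
          show ∑ y : State n, γ (x, y) * kernel Nbr f π x x' = ν₁ x * kernel Nbr f π x x'
          rw [← Finset.sum_mul, hγ1 x]
      _ = step Nbr f π ν₁ x' := rfl
  · intro y'
    have hinner : ∀ r : State n × State n,
        ∑ x' : State n, ∏ i, kap (sp r.1 i) (sp r.2 i) (x' i) (y' i)
          = kernel Nbr f π r.2 y' := by
      intro r
      rw [sum_prod_bool' (fun i a => kap (sp r.1 i) (sp r.2 i) a (y' i))]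
      unfold kernel
      exact Finset.prod_congr rfl fun i _ => kap_margin_a _ _ _
    calc ∑ x' : State n, ∑ r : State n × State n,
            γ r * ∏ i, kap (sp r.1 i) (sp r.2 i) (x' i) (y' i)
        = ∑ r : State n × State n,
            γ r * ∑ x' : State n, ∏ i, kap (sp r.1 i) (sp r.2 i) (x' i) (y' i) := by
          rw [Finset.sum_comm]
          exact Finset.sum_congr rfl fun r _ => (Finset.mul_sum _ _ _).symm
      _ = ∑ r : State n × State n, γ r * kernel Nbr f π r.2 y' := by
          exact Finset.sum_congr rfl fun r _ => by rw [hinner r]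
      _ = ∑ y : State n, ν₂ y * kernel Nbr f π y y' := by
          rw [Fintype.sum_prod_type]
          rw [Finset.sum_comm]
          refine Finset.sum_congr rfl fun y _ => ?_
          show ∑ x : State n, γ (x, y) * kernel Nbr f π y y' = ν₂ y * kernel Nbr f π y y'
          rw [← Finset.sum_mul, hγ2 y]
      _ = step Nbr f π ν₂ y' := rfl
  · -- cost bound
    have hinnercost : ∀ r : State n × State n,
        ∑ q : State n × State n,
          (∏ i, kap (sp r.1 i) (sp r.2 i) (q.1 i) (q.2 i)) * hamming q.1 q.2
        = ∑ j, |sp r.1 j - sp r.2 j| := by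
      intro r
      rw [Fintype.sum_prod_type]
      have hexp : ∀ x' y' : State n,
          (∏ i, kap (sp r.1 i) (sp r.2 i) (x' i) (y' i)) * hamming x' y'
          = ∑ j : Fin n, ∏ i, (kap (sp r.1 i) (sp r.2 i) (x' i) (y' i) *
              (if i = j then (if x' i = y' i then (0:ℝ) else 1) else 1)) := by
        intro x' y'
        unfold hamming
        rw [Finset.mul_sum]
        refine Finset.sum_congr rfl fun j _ => ?_
        rw [Finset.prod_mul_distrib]
        congr 1
        rw [Finset.prod_ite_eq' Finset.univ j
          (fun i => if x' i = y' i then (0:ℝ) else 1)]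
        simp
      simp_rw [hexp]
      have : ∀ x' : State n, ∑ y' : State n, ∑ j : Fin n, (∏ i,
          (kap (sp r.1 i) (sp r.2 i) (x' i) (y' i) *
            (if i = j then (if x' i = y' i then (0:ℝ) else 1) else 1)))
          = ∑ j : Fin n, ∑ y' : State n, (∏ i,
          (kap (sp r.1 i) (sp r.2 i) (x' i) (y' i) *
            (if i = j then (if x' i = y' i then (0:ℝ) else 1) else 1))) :=
        fun x' => Finset.sum_comm
      simp_rw [this]
      rw [Finset.sum_comm]
      refine Finset.sum_congr rfl fun j _ => ?_
      rw [sum_prod_bool2 (fun i a b => kap (sp r.1 i) (sp r.2 i) a b *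
        (if i = j then (if a = b then (0:ℝ) else 1) else 1))]
      rw [Finset.prod_eq_single j]
      · have hc := kap_cost (sp r.1 j) (sp r.2 j)
        rw [if_pos rfl]
        norm_num
        linarith
      · intro i _ hij
        rw [if_neg hij, if_neg hij, if_neg hij, if_neg hij, mul_one, mul_one, mul_one, mul_one]
        exact kap_mass _ _
      · intro h
        exact absurd (Finset.mem_univ j) h
    have hrw : ∑ q : State n × State n,
        (∑ r : State n × State n, γ r * ∏ i, kap (sp r.1 i) (sp r.2 i) (q.1 i) (q.2 i))
          * hamming q.1 q.2
        = ∑ r : State n × State n, γ r * ∑ j, |sp r.1 j - sp r.2 j| := by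
      calc ∑ q : State n × State n,
            (∑ r : State n × State n, γ r * ∏ i, kap (sp r.1 i) (sp r.2 i) (q.1 i) (q.2 i))
              * hamming q.1 q.2
          = ∑ q : State n × State n, ∑ r : State n × State n,
              γ r * ((∏ i, kap (sp r.1 i) (sp r.2 i) (q.1 i) (q.2 i)) * hamming q.1 q.2) := by
            refine Finset.sum_congr rfl fun q _ => ?_
            rw [Finset.sum_mul]
            exact Finset.sum_congr rfl fun r _ => by ring
        _ = ∑ r : State n × State n, ∑ q : State n × State n,
              γ r * ((∏ i, kap (sp r.1 i) (sp r.2 i) (q.1 i) (q.2 i)) * hamming q.1 q.2) :=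
            Finset.sum_comm
        _ = ∑ r : State n × State n, γ r * ∑ j, |sp r.1 j - sp r.2 j| := by
            refine Finset.sum_congr rfl fun r _ => ?_
            rw [← Finset.mul_sum, hinnercost r]
    rw [hrw]
    calc ∑ r : State n × State n, γ r * ∑ j, |sp r.1 j - sp r.2 j|
        ≤ ∑ r : State n × State n, γ r * (C * hamming r.1 r.2) := by
          refine Finset.sum_le_sum fun r _ => ?_
          exact mul_le_mul_of_nonneg_left (key_bound hG hReg hπ r.1 r.2) (hγ0 r)
      _ = C * ∑ p : State n × State n, γ p * hamming p.1 p.2 := by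
          rw [Finset.mul_sum]
          exact Finset.sum_congr rfl fun r _ => by ring

end AuxContraction

open MRT in
/-- under the regularity assumptions, the transition kernel is a contraction
for the `L1`-Wasserstein distance. -/
theorem WL1_contraction
    (n : ℕ) (Nbr : Fin n → Finset (Fin n)) (f : Fin n → Bool → Bool → ℝ → ℝ)
    (π : Fin n → ℝ) (L B C : ℝ) (D : ℕ)
    (hG : GoodGraph Nbr)
    (hf : PosF f)
    (hπ : ∀ i, π i ∈ Set.Ioo (0 : ℝ) 1)
    (hReg : Regular Nbr f L B D C)
    (ν₁ ν₂ : State n → ℝ) (h₁ : IsDist ν₁) (h₂ : IsDist ν₂) :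
    WL1 (step Nbr f π ν₁) (step Nbr f π ν₂) ≤ C * WL1 ν₁ ν₂ := by
  classical
  set S : Set ℝ := {c | ∃ γ, IsCoupling γ ν₁ ν₂ ∧
    c = ∑ p : State n × State n, γ p * hamming p.1 p.2} with hS
  set S' : Set ℝ := {c | ∃ γ, IsCoupling γ (step Nbr f π ν₁) (step Nbr f π ν₂) ∧
    c = ∑ p : State n × State n, γ p * hamming p.1 p.2} with hS'
  have hWL1 : WL1 ν₁ ν₂ = sInf S := rfl
  have hWL1' : WL1 (step Nbr f π ν₁) (step Nbr f π ν₂) = sInf S' := rfl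
  have hprod : IsCoupling (fun p : State n × State n => ν₁ p.1 * ν₂ p.2) ν₁ ν₂ := by
    refine ⟨fun p => mul_nonneg (h₁.1 _) (h₂.1 _), fun x => ?_, fun y => ?_⟩
    · show ∑ y : State n, ν₁ x * ν₂ y = ν₁ x
      rw [← Finset.mul_sum, h₂.2, mul_one]
    · show ∑ x : State n, ν₁ x * ν₂ y = ν₂ y
      rw [← Finset.sum_mul, h₁.2, one_mul]
  have hS_ne : S.Nonempty := ⟨_, _, hprod, rfl⟩
  have hS0 : ∀ c ∈ S, 0 ≤ c := by
    rintro c ⟨γ, hγ, rfl⟩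
    exact Finset.sum_nonneg fun p _ => mul_nonneg (hγ.1 p) (hamming_nonneg _ _)
  have hS'0 : ∀ c ∈ S', 0 ≤ c := by
    rintro c ⟨γ, hγ, rfl⟩
    exact Finset.sum_nonneg fun p _ => mul_nonneg (hγ.1 p) (hamming_nonneg _ _)
  have hS'bdd : BddBelow S' := ⟨0, fun c hc => hS'0 c hc⟩
  have hmap : ∀ c ∈ S, ∃ c' ∈ S', c' ≤ C * c := by
    rintro c ⟨γ, hγ, rfl⟩
    obtain ⟨Γ, hΓ, hcost⟩ := coupling_step Nbr f π L B C D hG hf hπ hReg ν₁ ν₂ γ hγ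
    exact ⟨_, ⟨Γ, hΓ, rfl⟩, hcost⟩
  rw [hWL1, hWL1']
  rcases le_or_gt 0 C with hC | hC
  · have h1 : sInf S' ≤ sInf ((fun c => C * c) '' S) := by
      apply le_csInf (hS_ne.image _)
      rintro d ⟨c, hc, rfl⟩
      obtain ⟨c', hc', hle⟩ := hmap c hc
      exact (csInf_le hS'bdd hc').trans hle
    have h2 : sInf ((fun c => C * c) '' S) = C * sInf S := by
      have := Real.sInf_smul_of_nonneg hC S
      rw [← Set.image_smul] at this
      exact this
    rw [← h2]; exact h1
  · have hall : ∀ c ∈ S, c = 0 := by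
      intro c hc
      obtain ⟨c', hc', hle⟩ := hmap c hc
      have h0c := hS0 c hc
      have h0c' := hS'0 c' hc'
      nlinarith
    obtain ⟨c₀, hc₀⟩ := id hS_ne
    have hc₀0 : c₀ = 0 := hall c₀ hc₀
    have hSinf : sInf S = 0 := by
      refine le_antisymm ?_ (le_csInf hS_ne fun c hc => (hall c hc).ge)
      have := csInf_le ⟨0, fun z hz => hS0 z hz⟩ hc₀
      rw [hc₀0] at this
      exact this
    obtain ⟨c', hc', hle⟩ := hmap c₀ hc₀
    have hc'0 : c' = 0 := by
      refine le_antisymm ?_ (hS'0 c' hc')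
      rw [hc₀0, mul_zero] at hle
      exact hle
    rw [hSinf, mul_zero]
    calc sInf S' ≤ c' := csInf_le hS'bdd hc'
      _ = 0 := hc'0
end

section
/- Under the regularity assumptions, the transition kernel P(π) of the MDP with Bernoulli treatments is a contraction for the graph-dependent Wasserstein distance W_{d_E}: for any two probability distributions ν₁, ν₂ on {0,1}^n, W_{d_E}(ν₁ P(π), ν₂ P(π)) ≤ C·W_{d_E}(ν₁, ν₂). -/
open Finset Filter Topology

noncomputable section
namespace WdEAux
open MRT Finset

/-- Monotone coupling of two Bernoulli distributions. -/
def couple (p q : ℝ) : Bool → Bool → ℝ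
  | true, true => min p q
  | true, false => p - min p q
  | false, true => q - min p q
  | false, false => 1 - max p q

lemma couple_nonneg {p q : ℝ} (hp : p ∈ Set.Icc (0:ℝ) 1) (hq : q ∈ Set.Icc (0:ℝ) 1) :
    ∀ a b, 0 ≤ couple p q a b := by
  rintro (_|_) (_|_) <;> simp [couple]
  · exact ⟨hp.2, hq.2⟩
  · exact ⟨hp.1, hq.1⟩

lemma couple_margin_left (p q : ℝ) (a : Bool) :
    ∑ b : Bool, couple p q a b = if a then p else 1 - p := by
  have h := min_add_max p q
  cases a <;> simp [couple] <;> linarith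

lemma couple_margin_right (p q : ℝ) (b : Bool) :
    ∑ a : Bool, couple p q a b = if b then q else 1 - q := by
  have h := min_add_max p q
  cases b <;> simp [couple] <;> linarith

lemma couple_total (p q : ℝ) : ∑ c : Bool × Bool, couple p q c.1 c.2 = 1 := by
  have h := min_add_max p q
  simp [Fintype.sum_prod_type, couple]
  linarith

lemma couple_diff (p q : ℝ) :
    ∑ c : Bool × Bool, couple p q c.1 c.2 * (if c.1 = c.2 then (0:ℝ) else 1) = |p - q| := by
  have h := min_add_max p q
  have h2 : max p q - min p q = |p - q| := by
    rw [abs_sub_comm]; exact max_sub_min_eq_abs p q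
  simp [Fintype.sum_prod_type, couple]
  linarith

variable {n : ℕ}

lemma sum_pi_prod {α : Type*} [Fintype α] (g : Fin n → α → ℝ) :
    ∑ z : Fin n → α, ∏ i, g i (z i) = ∏ i, ∑ c, g i c :=
  (Fintype.prod_sum g).symm

lemma sum_pi_prod_weight {α : Type*} [Fintype α] (g : Fin n → α → ℝ) (j : Fin n) (h : α → ℝ)
    (hg : ∀ i, i ≠ j → ∑ c, g i c = 1) :
    ∑ z : Fin n → α, (∏ i, g i (z i)) * h (z j) = ∑ c, g j c * h c := by
  have step1 : ∀ z : Fin n → α,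
      (∏ i, g i (z i)) * h (z j) = ∏ i, (g i (z i) * if i = j then h (z i) else 1) := by
    intro z
    rw [Finset.prod_mul_distrib, Finset.prod_ite_eq' Finset.univ j (fun i => h (z i))]
    simp
  calc ∑ z : Fin n → α, (∏ i, g i (z i)) * h (z j)
      = ∑ z : Fin n → α, ∏ i, (g i (z i) * if i = j then h (z i) else 1) := by
        exact Finset.sum_congr rfl fun z _ => step1 z
    _ = ∏ i, ∑ c, (g i c * if i = j then h c else 1) :=
        sum_pi_prod (fun i c => g i c * if i = j then h c else 1)
    _ = ∑ c, g j c * h c := by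
        rw [Finset.prod_eq_single j]
        · simp
        · intro i _ hij
          simp [hij, hg i hij]
        · simp

/-- The coupled transition kernel. -/
def K (Nbr : Fin n → Finset (Fin n)) (f : Fin n → Bool → Bool → ℝ → ℝ)
    (π : Fin n → ℝ) (p q : State n × State n) : ℝ :=
  ∏ i, couple (succProb Nbr f π p.1 i) (succProb Nbr f π p.2 i) (q.1 i) (q.2 i)

lemma zc_nonneg (Nbr : Fin n → Finset (Fin n)) (y : State n) (i : Fin n) :
    0 ≤ zc Nbr y i :=
  Finset.sum_nonneg fun j _ => by positivity

lemma succProb_mem {Nbr : Fin n → Finset (Fin n)} {f : Fin n → Bool → Bool → ℝ → ℝ}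
    {π : Fin n → ℝ} (hf : PosF f) (hπ : ∀ i, π i ∈ Set.Ioo (0:ℝ) 1)
    (y : State n) (i : Fin n) : succProb Nbr f π y i ∈ Set.Icc (0:ℝ) 1 := by
  have hz := zc_nonneg Nbr y i
  have h1 := hf i (y i) true _ hz
  have h0 := hf i (y i) false _ hz
  have hp := hπ i
  obtain ⟨hp0, hp1⟩ := hp
  obtain ⟨h10, h11⟩ := h1
  obtain ⟨h00, h01⟩ := h0
  constructor <;> unfold succProb <;> nlinarith

lemma K_margin_fst (Nbr : Fin n → Finset (Fin n)) (f : Fin n → Bool → Bool → ℝ → ℝ)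
    (π : Fin n → ℝ) (p : State n × State n) (x' : State n) :
    ∑ y' : State n, K Nbr f π p (x', y') = kernel Nbr f π p.1 x' := by
  have := sum_pi_prod (n := n)
    (fun i b => couple (succProb Nbr f π p.1 i) (succProb Nbr f π p.2 i) (x' i) b)
  unfold K kernel
  rw [this]
  exact Finset.prod_congr rfl fun i _ => couple_margin_left _ _ _

lemma K_margin_snd (Nbr : Fin n → Finset (Fin n)) (f : Fin n → Bool → Bool → ℝ → ℝ)
    (π : Fin n → ℝ) (p : State n × State n) (y' : State n) :
    ∑ x' : State n, K Nbr f π p (x', y') = kernel Nbr f π p.2 y' := by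
  have := sum_pi_prod (n := n)
    (fun i a => couple (succProb Nbr f π p.1 i) (succProb Nbr f π p.2 i) a (y' i))
  unfold K kernel
  rw [this]
  exact Finset.prod_congr rfl fun i _ => couple_margin_right _ _ _

lemma K_diff (Nbr : Fin n → Finset (Fin n)) (f : Fin n → Bool → Bool → ℝ → ℝ)
    (π : Fin n → ℝ) (p : State n × State n) (j : Fin n) :
    ∑ q : State n × State n, K Nbr f π p q * (if q.1 j = q.2 j then (0:ℝ) else 1)
      = |succProb Nbr f π p.1 j - succProb Nbr f π p.2 j| := by
  have key := sum_pi_prod_weight (n := n)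
    (fun (i : Fin n) (c : Bool × Bool) =>
      couple (succProb Nbr f π p.1 i) (succProb Nbr f π p.2 i) c.1 c.2) j
    (fun (c : Bool × Bool) => if c.1 = c.2 then (0:ℝ) else 1)
    (fun i _ => couple_total _ _)
  rw [← Equiv.sum_comp (Equiv.arrowProdEquivProdArrow (Fin n) (fun _ => Bool) (fun _ => Bool))
    (fun q : State n × State n => K Nbr f π p q * (if q.1 j = q.2 j then (0:ℝ) else 1))]
  exact key.trans (couple_diff _ _)

lemma abs_succProb_diff_le {Nbr : Fin n → Finset (Fin n)} {f : Fin n → Bool → Bool → ℝ → ℝ}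
    {π : Fin n → ℝ} {L B C : ℝ} {D : ℕ}
    (hπ : ∀ i, π i ∈ Set.Ioo (0:ℝ) 1) (hReg : Regular Nbr f L B D C)
    (x y : State n) (j : Fin n) :
    |succProb Nbr f π x j - succProb Nbr f π y j| ≤
      B * (if x j = y j then 0 else 1) + L * nbrDiff Nbr j x y := by
  obtain ⟨hL, hLip, hB, _, _, _⟩ := hReg
  have hzx := zc_nonneg Nbr x j
  have hzy := zc_nonneg Nbr y j
  have hzdiff : |zc Nbr x j - zc Nbr y j| ≤ nbrDiff Nbr j x y := by
    unfold zc nbrDiff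
    rw [← Finset.sum_sub_distrib]
    refine (Finset.abs_sum_le_sum_abs _ _).trans (Finset.sum_le_sum fun k _ => ?_)
    by_cases h : x k = y k
    · simp [h]
    · rcases Bool.eq_false_or_eq_true (x k) with h1 | h1 <;>
        rcases Bool.eq_false_or_eq_true (y k) with h2 | h2 <;>
        simp [h1, h2] at h ⊢
  have key : ∀ w : Bool, |f j (x j) w (zc Nbr x j) - f j (y j) w (zc Nbr y j)| ≤
      B * (if x j = y j then 0 else 1) + L * nbrDiff Nbr j x y := by
    intro w
    have hlip : |f j (y j) w (zc Nbr x j) - f j (y j) w (zc Nbr y j)| ≤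
        L * nbrDiff Nbr j x y := by
      refine (hLip j (y j) w _ _ hzx hzy).trans ?_
      exact mul_le_mul_of_nonneg_left hzdiff hL
    by_cases h : x j = y j
    · simp only [h, if_pos]
      calc |f j (y j) w (zc Nbr x j) - f j (y j) w (zc Nbr y j)| ≤ L * nbrDiff Nbr j x y := hlip
        _ = B * 0 + L * nbrDiff Nbr j x y := by ring
    · have hBd : |f j (x j) w (zc Nbr x j) - f j (y j) w (zc Nbr x j)| ≤ B := by
        rcases Bool.eq_false_or_eq_true (x j) with h1 | h1 <;>
          rcases Bool.eq_false_or_eq_true (y j) with h2 | h2 <;>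
          rw [h1, h2] at h ⊢
        · exact absurd rfl h
        · exact hB j w _ hzx
        · rw [abs_sub_comm]; exact hB j w _ hzx
        · exact absurd rfl h
      simp only [h, if_neg, not_false_iff]
      calc |f j (x j) w (zc Nbr x j) - f j (y j) w (zc Nbr y j)|
          ≤ |f j (x j) w (zc Nbr x j) - f j (y j) w (zc Nbr x j)| +
            |f j (y j) w (zc Nbr x j) - f j (y j) w (zc Nbr y j)| := by
            have := abs_sub_abs_le_abs_sub (f j (x j) w (zc Nbr x j)) (f j (y j) w (zc Nbr x j))
            exact abs_sub_le _ _ _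
        _ ≤ B + L * nbrDiff Nbr j x y := add_le_add hBd hlip
        _ = B * 1 + L * nbrDiff Nbr j x y := by ring
  obtain ⟨hπ0, hπ1⟩ := hπ j
  have h1 := key true
  have h0 := key false
  have expand : succProb Nbr f π x j - succProb Nbr f π y j =
      π j * (f j (x j) true (zc Nbr x j) - f j (y j) true (zc Nbr y j)) +
      (1 - π j) * (f j (x j) false (zc Nbr x j) - f j (y j) false (zc Nbr y j)) := by
    unfold succProb; ring
  rw [expand]
  calc |π j * (f j (x j) true (zc Nbr x j) - f j (y j) true (zc Nbr y j)) +
      (1 - π j) * (f j (x j) false (zc Nbr x j) - f j (y j) false (zc Nbr y j))|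
      ≤ |π j * (f j (x j) true (zc Nbr x j) - f j (y j) true (zc Nbr y j))| +
        |(1 - π j) * (f j (x j) false (zc Nbr x j) - f j (y j) false (zc Nbr y j))| :=
        abs_add_le _ _
    _ = π j * |f j (x j) true (zc Nbr x j) - f j (y j) true (zc Nbr y j)| +
        (1 - π j) * |f j (x j) false (zc Nbr x j) - f j (y j) false (zc Nbr y j)| := by
        rw [abs_mul, abs_mul, abs_of_pos hπ0, abs_of_pos (show (0:ℝ) < 1 - π j by linarith)]
    _ ≤ π j * (B * (if x j = y j then 0 else 1) + L * nbrDiff Nbr j x y) +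
        (1 - π j) * (B * (if x j = y j then 0 else 1) + L * nbrDiff Nbr j x y) := by
        exact add_le_add (mul_le_mul_of_nonneg_left h1 hπ0.le)
          (mul_le_mul_of_nonneg_left h0 (by linarith))
    _ = B * (if x j = y j then 0 else 1) + L * nbrDiff Nbr j x y := by ring

lemma prodCoupling {ν₁ ν₂ : State n → ℝ} (h₁ : IsDist ν₁) (h₂ : IsDist ν₂) :
    IsCoupling (fun p : State n × State n => ν₁ p.1 * ν₂ p.2) ν₁ ν₂ := by
  refine ⟨fun p => mul_nonneg (h₁.1 _) (h₂.1 _), fun x => ?_, fun y => ?_⟩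
  · show ∑ y : State n, ν₁ x * ν₂ y = ν₁ x
    rw [← Finset.mul_sum, h₂.2, mul_one]
  · show ∑ x : State n, ν₁ x * ν₂ y = ν₂ y
    rw [← Finset.sum_mul, h₁.2, one_mul]


def Eg (Nbr : Fin n → Finset (Fin n)) (γ : State n × State n → ℝ) (i : Fin n) : ℝ :=
  ∑ p : State n × State n, γ p * nbrDiff Nbr i p.1 p.2

lemma nbrDiff_nonneg (Nbr : Fin n → Finset (Fin n)) (i : Fin n) (x y : State n) :
    0 ≤ nbrDiff Nbr i x y :=
  Finset.sum_nonneg fun j _ => by positivity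

lemma Eg_nonneg {Nbr : Fin n → Finset (Fin n)} {γ : State n × State n → ℝ}
    (hγ : ∀ p, 0 ≤ γ p) (i : Fin n) : 0 ≤ Eg Nbr γ i :=
  Finset.sum_nonneg fun p _ => mul_nonneg (hγ p) (nbrDiff_nonneg _ _ _ _)

lemma WdE_one_eq (Nbr : Fin n → Finset (Fin n)) (ν₁ ν₂ : State n → ℝ) :
    WdE Nbr 1 ν₁ ν₂ = sInf {c | ∃ γ, IsCoupling γ ν₁ ν₂ ∧ c = ⨆ i, Eg Nbr γ i} := by
  unfold WdE Eg
  simp only [pow_one, Nat.cast_one, inv_one, Real.rpow_one]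

lemma coupling_step {Nbr : Fin n → Finset (Fin n)} {f : Fin n → Bool → Bool → ℝ → ℝ}
    {π : Fin n → ℝ} (hf : PosF f) (hπ : ∀ i, π i ∈ Set.Ioo (0:ℝ) 1)
    {ν₁ ν₂ : State n → ℝ} {γ : State n × State n → ℝ} (hγ : IsCoupling γ ν₁ ν₂) :
    IsCoupling (fun q => ∑ p : State n × State n, γ p * K Nbr f π p q)
      (step Nbr f π ν₁) (step Nbr f π ν₂) := by
  refine ⟨fun q => Finset.sum_nonneg fun p _ => mul_nonneg (hγ.1 p) ?_, fun x => ?_, fun y => ?_⟩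
  · exact Finset.prod_nonneg fun i _ =>
      couple_nonneg (succProb_mem hf hπ _ i) (succProb_mem hf hπ _ i) _ _
  · calc ∑ y : State n, ∑ p : State n × State n, γ p * K Nbr f π p (x, y)
        = ∑ p : State n × State n, ∑ y : State n, γ p * K Nbr f π p (x, y) :=
          Finset.sum_comm
      _ = ∑ p : State n × State n, γ p * kernel Nbr f π p.1 x := by
          refine Finset.sum_congr rfl fun p _ => ?_
          rw [← Finset.mul_sum, K_margin_fst]
      _ = ∑ a : State n, ∑ b : State n, γ (a, b) * kernel Nbr f π a x :=
          Fintype.sum_prod_type _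
      _ = ∑ a : State n, ν₁ a * kernel Nbr f π a x := by
          refine Finset.sum_congr rfl fun a _ => ?_
          rw [← Finset.sum_mul, hγ.2.1 a]
      _ = step Nbr f π ν₁ x := rfl
  · calc ∑ x : State n, ∑ p : State n × State n, γ p * K Nbr f π p (x, y)
        = ∑ p : State n × State n, ∑ x : State n, γ p * K Nbr f π p (x, y) :=
          Finset.sum_comm
      _ = ∑ p : State n × State n, γ p * kernel Nbr f π p.2 y := by
          refine Finset.sum_congr rfl fun p _ => ?_
          rw [← Finset.mul_sum, K_margin_snd]
      _ = ∑ b : State n, ∑ a : State n, γ (a, b) * kernel Nbr f π b y :=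
          Fintype.sum_prod_type_right _
      _ = ∑ b : State n, ν₂ b * kernel Nbr f π b y := by
          refine Finset.sum_congr rfl fun b _ => ?_
          rw [← Finset.sum_mul, hγ.2.2 b]
      _ = step Nbr f π ν₂ y := rfl

lemma Eg_coupled (Nbr : Fin n → Finset (Fin n)) (f : Fin n → Bool → Bool → ℝ → ℝ)
    (π : Fin n → ℝ) (γ : State n × State n → ℝ) (i : Fin n) :
    Eg Nbr (fun q => ∑ p : State n × State n, γ p * K Nbr f π p q) i
      = ∑ j ∈ Nbr i, ∑ p : State n × State n,
          γ p * |succProb Nbr f π p.1 j - succProb Nbr f π p.2 j| := by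
  have inner : ∀ j : Fin n, (∑ q : State n × State n,
        (∑ p : State n × State n, γ p * K Nbr f π p q) * (if q.1 j = q.2 j then (0:ℝ) else 1))
      = ∑ p : State n × State n, γ p * |succProb Nbr f π p.1 j - succProb Nbr f π p.2 j| := by
    intro j
    calc ∑ q : State n × State n,
          (∑ p : State n × State n, γ p * K Nbr f π p q) * (if q.1 j = q.2 j then (0:ℝ) else 1)
        = ∑ q : State n × State n, ∑ p : State n × State n,
            γ p * (K Nbr f π p q * (if q.1 j = q.2 j then (0:ℝ) else 1)) := by
          refine Finset.sum_congr rfl fun q _ => ?_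
          rw [Finset.sum_mul]
          exact Finset.sum_congr rfl fun p _ => by ring
      _ = ∑ p : State n × State n, ∑ q : State n × State n,
            γ p * (K Nbr f π p q * (if q.1 j = q.2 j then (0:ℝ) else 1)) := Finset.sum_comm
      _ = ∑ p : State n × State n,
            γ p * |succProb Nbr f π p.1 j - succProb Nbr f π p.2 j| := by
          refine Finset.sum_congr rfl fun p _ => ?_
          rw [← Finset.mul_sum, K_diff]
  calc Eg Nbr (fun q => ∑ p : State n × State n, γ p * K Nbr f π p q) i
      = ∑ q : State n × State n, ∑ j ∈ Nbr i,
          (∑ p : State n × State n, γ p * K Nbr f π p q) * (if q.1 j = q.2 j then (0:ℝ) else 1) := by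
        refine Finset.sum_congr rfl fun q _ => ?_
        rw [← Finset.mul_sum]
        rfl
    _ = ∑ j ∈ Nbr i, ∑ q : State n × State n,
          (∑ p : State n × State n, γ p * K Nbr f π p q) * (if q.1 j = q.2 j then (0:ℝ) else 1) :=
        Finset.sum_comm
    _ = ∑ j ∈ Nbr i, ∑ p : State n × State n,
          γ p * |succProb Nbr f π p.1 j - succProb Nbr f π p.2 j| :=
        Finset.sum_congr rfl fun j _ => inner j

lemma Eg_eq_sum_ind (Nbr : Fin n → Finset (Fin n)) (γ : State n × State n → ℝ) (i : Fin n) :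
    Eg Nbr γ i = ∑ j ∈ Nbr i, ∑ p : State n × State n,
      γ p * (if p.1 j = p.2 j then (0:ℝ) else 1) := by
  unfold Eg nbrDiff
  rw [Finset.sum_comm]
  exact Finset.sum_congr rfl fun p _ => Finset.mul_sum _ _ _

end WdEAux
end
open MRT in
/-- under the regularity assumptions, the transition kernel is a contraction
for the graph-dependent Wasserstein distance `W_{d_E}`. -/
theorem WdE_contraction
    (n : ℕ) (Nbr : Fin n → Finset (Fin n)) (f : Fin n → Bool → Bool → ℝ → ℝ)
    (π : Fin n → ℝ) (L B C : ℝ) (D : ℕ)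
    (hG : GoodGraph Nbr)
    (hf : PosF f)
    (hπ : ∀ i, π i ∈ Set.Ioo (0 : ℝ) 1)
    (hReg : Regular Nbr f L B D C)
    (ν₁ ν₂ : State n → ℝ) (h₁ : IsDist ν₁) (h₂ : IsDist ν₂) :
    WdE Nbr 1 (step Nbr f π ν₁) (step Nbr f π ν₂) ≤ C * WdE Nbr 1 ν₁ ν₂ := by
  classical
  rw [WdEAux.WdE_one_eq, WdEAux.WdE_one_eq]
  set S₂ := {c | ∃ γ, IsCoupling γ (step Nbr f π ν₁) (step Nbr f π ν₂) ∧
    c = ⨆ i, WdEAux.Eg Nbr γ i} with hS₂def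
  set S₁ := {c | ∃ γ, IsCoupling γ ν₁ ν₂ ∧ c = ⨆ i, WdEAux.Eg Nbr γ i} with hS₁def
  rcases isEmpty_or_nonempty (Fin n) with hE | hNE
  · have h0 : ∀ γ : State n × State n → ℝ, (⨆ i, WdEAux.Eg Nbr γ i) = 0 := fun γ =>
      Real.iSup_of_isEmpty _
    have hL0 : S₂ = {0} := by
      rw [Set.eq_singleton_iff_unique_mem]
      refine ⟨⟨_, WdEAux.coupling_step hf hπ (WdEAux.prodCoupling h₁ h₂), (h0 _).symm⟩, ?_⟩
      rintro c ⟨γ, -, rfl⟩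
      exact h0 γ
    have hR0 : S₁ = {0} := by
      rw [Set.eq_singleton_iff_unique_mem]
      refine ⟨⟨_, WdEAux.prodCoupling h₁ h₂, (h0 _).symm⟩, ?_⟩
      rintro c ⟨γ, -, rfl⟩
      exact h0 γ
    rw [hL0, hR0, csInf_singleton]
    simp
  · obtain ⟨i₀⟩ := hNE
    have hL : 0 ≤ L := hReg.1
    have hB0 : 0 ≤ B := (abs_nonneg _).trans (hReg.2.2.1 i₀ true 0 le_rfl)
    have hBLD : B + L * D ≤ C := hReg.2.2.2.2.1
    have hC0 : 0 ≤ C := le_trans (add_nonneg hB0 (mul_nonneg hL (Nat.cast_nonneg D))) hBLD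
    have hbdd : BddBelow S₂ := by
      refine ⟨0, ?_⟩
      rintro c ⟨γ', hγ', rfl⟩
      exact Real.iSup_nonneg fun i => WdEAux.Eg_nonneg hγ'.1 i
    have key : ∀ t ∈ S₁, sInf S₂ ≤ C * t := by
      rintro t ⟨γ, hγ, rfl⟩
      set M := ⨆ i, WdEAux.Eg Nbr γ i with hM
      have hM0 : 0 ≤ M := Real.iSup_nonneg fun i => WdEAux.Eg_nonneg hγ.1 i
      have hMle : ∀ j, WdEAux.Eg Nbr γ j ≤ M := fun j =>
        le_ciSup (Set.Finite.bddAbove (Set.finite_range _)) j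
      set γ₂ := fun q : State n × State n =>
        ∑ p : State n × State n, γ p * WdEAux.K Nbr f π p q with hγ₂def
      have hcoup := WdEAux.coupling_step (Nbr := Nbr) hf hπ hγ
      have hEg : ∀ i, WdEAux.Eg Nbr γ₂ i ≤ C * M := by
        intro i
        rw [hγ₂def, WdEAux.Eg_coupled]
        calc ∑ j ∈ Nbr i, ∑ p : State n × State n,
              γ p * |succProb Nbr f π p.1 j - succProb Nbr f π p.2 j|
            ≤ ∑ j ∈ Nbr i, ∑ p : State n × State n,
              γ p * (B * (if p.1 j = p.2 j then (0:ℝ) else 1) + L * nbrDiff Nbr j p.1 p.2) := by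
              refine Finset.sum_le_sum fun j _ => Finset.sum_le_sum fun p _ => ?_
              exact mul_le_mul_of_nonneg_left
                (WdEAux.abs_succProb_diff_le hπ hReg p.1 p.2 j) (hγ.1 p)
          _ = B * (∑ j ∈ Nbr i, ∑ p : State n × State n,
                γ p * (if p.1 j = p.2 j then (0:ℝ) else 1)) +
              L * ∑ j ∈ Nbr i, WdEAux.Eg Nbr γ j := by
              unfold WdEAux.Eg
              rw [Finset.mul_sum, Finset.mul_sum, ← Finset.sum_add_distrib]
              refine Finset.sum_congr rfl fun j _ => ?_
              rw [Finset.mul_sum, Finset.mul_sum, ← Finset.sum_add_distrib]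
              exact Finset.sum_congr rfl fun p _ => by ring
          _ = B * WdEAux.Eg Nbr γ i + L * ∑ j ∈ Nbr i, WdEAux.Eg Nbr γ j := by
              rw [WdEAux.Eg_eq_sum_ind]
          _ ≤ B * M + L * ((D : ℝ) * M) := by
              have h2 : ∑ j ∈ Nbr i, WdEAux.Eg Nbr γ j ≤ (D : ℝ) * M := by
                refine (Finset.sum_le_sum fun j _ => hMle j).trans ?_
                rw [Finset.sum_const, nsmul_eq_mul]
                exact mul_le_mul_of_nonneg_right (Nat.cast_le.mpr (hReg.2.2.2.1 i)) hM0
              exact add_le_add (mul_le_mul_of_nonneg_left (hMle i) hB0)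
                (mul_le_mul_of_nonneg_left h2 hL)
          _ ≤ C * M := by nlinarith
      have hVin : (⨆ i, WdEAux.Eg Nbr γ₂ i) ∈ S₂ := ⟨γ₂, hcoup, rfl⟩
      exact (csInf_le hbdd hVin).trans (Real.iSup_le hEg (mul_nonneg hC0 hM0))
    have hne : S₁.Nonempty := ⟨_, _, WdEAux.prodCoupling h₁ h₂, rfl⟩
    rcases hC0.eq_or_lt with hCeq | hCpos
    · obtain ⟨t, ht⟩ := hne
      have h := key t ht
      rw [← hCeq] at h ⊢
      simpa using h
    · have hle : sInf S₂ / C ≤ sInf S₁ :=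
        le_csInf hne fun t ht => (div_le_iff₀ hCpos).mpr ((key t ht).trans_eq (mul_comm C t))
      have h := (div_le_iff₀ hCpos).mp hle
      linarith
end
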